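/- arXiv:2503.13849 — 6 statements merged into one kernel-verified Lean document; each statement's English description precedes it below -/
import Mathlib

section
/- Let f : ℝⁿ → ℝⁿ be a super-linearizable polynomial vector field, let g be a real polynomial in n−1 variables, and let φ(x) = (x₁, …, x_{n−1}, xₙ + g(x₁, …, x_{n−1})) be the corresponding elementary transformation of ℝⁿ, whose inverse is φ⁻¹(y) = (y₁, …, y_{n−1}, yₙ − g(y₁, …, y_{n−1})). Then the transformed polynomial vector field h(y) = Dφ(φ⁻¹(y)) · f(φ⁻¹(y)), whose components are h_i(y) = f_i(y₁, …, y_{n−1}, yₙ − g(y₁, …, y_{n−1})) for 1 ≤ i ≤ n−1 and h_n(y) = f_n(y₁, …, y_{n−1}, yₙ − g(y₁, …, y_{n−1})) + Σ_{i=1}^{n−1} (∂g/∂y_i)(y₁, …, y_{n−1}) · f_i(y₁, …, y_{n−1}, yₙ − g(y₁, …, y_{n−1})), is super-linearizable. -/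
open Matrix MvPolynomial

/-- A map between finite-dimensional real coordinate spaces is polynomial if each
component is given by a real multivariate polynomial. -/
def IsPolyMap {n m : ℕ} (f : (Fin n → ℝ) → (Fin m → ℝ)) : Prop :=
  ∃ P : Fin m → MvPolynomial (Fin n) ℝ, ∀ x i, f x i = MvPolynomial.eval x (P i)

/-- A vector field `f : ℝⁿ → ℝⁿ` is super-linearizable if there are `k ∈ ℕ`, a matrix
`A ∈ ℝ^{(n+k)×(n+k)}` and a polynomial map `p : ℝⁿ → ℝᵏ` such that every solution of
`ẋ = f(x)` starting at `x₀` is, for `t ≥ 0`, the projection on the first `n` coordinates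
of `t ↦ exp(tA)·(x₀, p(x₀))`. -/
def IsSuperLinearizable {n : ℕ} (f : (Fin n → ℝ) → (Fin n → ℝ)) : Prop :=
  ∃ (k : ℕ) (A : Matrix (Fin (n + k)) (Fin (n + k)) ℝ)
    (p : (Fin n → ℝ) → (Fin k → ℝ)), IsPolyMap p ∧
    ∀ (x₀ : Fin n → ℝ) (x : ℝ → (Fin n → ℝ)),
      x 0 = x₀ →
      (∀ t : ℝ, 0 ≤ t → HasDerivAt x (f (x t)) t) →
      ∀ t : ℝ, 0 ≤ t → ∀ i : Fin n,
        (NormedSpace.exp (t • A)).mulVec (Fin.append x₀ (p x₀)) (Fin.castAdd k i) = x t i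

set_option maxHeartbeats 1000000
set_option synthInstance.maxHeartbeats 400000

attribute [local instance] Matrix.linftyOpNormedRing Matrix.linftyOpNormedAlgebra

namespace SLaux

lemma hasDerivAt_eval {N : ℕ} (q : MvPolynomial (Fin N) ℝ) (z : ℝ → Fin N → ℝ)
    (z' : Fin N → ℝ) (t : ℝ) (hz : ∀ j, HasDerivAt (fun s => z s j) (z' j) t) :
    HasDerivAt (fun s => MvPolynomial.eval (z s) q)
      (∑ j, MvPolynomial.eval (z t) (MvPolynomial.pderiv j q) * z' j) t := by
  induction q using MvPolynomial.induction_on with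
  | C a => simpa using hasDerivAt_const t _
  | add p q hp hq =>
      have := hp.add hq
      simp only [map_add, eval_add, add_mul] at *
      refine this.congr_deriv (Eq.symm ?_)
      rw [← Finset.sum_add_distrib]
  | mul_X p i hp =>
      have H := hp.mul (hz i)
      simp only [eval_mul, eval_X] at *
      refine H.congr_deriv (Eq.symm ?_)
      simp only [pderiv_mul, pderiv_X, eval_add, eval_mul, add_mul, Finset.sum_add_distrib,
        eval_X]
      congr 1
      · rw [Finset.sum_mul]
        refine Finset.sum_congr rfl fun j _ => by ring
      · rw [Finset.sum_eq_single i]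
        · simp
        · intro j _ hj
          simp [Pi.single_eq_of_ne hj.symm]
        · simp

lemma totalDegree_pderiv_le {N : ℕ} (j : Fin N) (q : MvPolynomial (Fin N) ℝ) :
    (MvPolynomial.pderiv j q).totalDegree ≤ q.totalDegree - 1 := by
  conv_lhs => rw [q.as_sum]
  rw [map_sum]
  refine le_trans (MvPolynomial.totalDegree_finset_sum _ _) (Finset.sup_le fun s hs => ?_)
  rw [pderiv_monomial]
  rcases eq_or_ne (s j) 0 with h0 | h0
  · simp [h0]
  · refine le_trans (totalDegree_monomial_le _ _) ?_
    have h1 : Finsupp.single j 1 ≤ s := by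
      rw [Finsupp.single_le_iff]
      omega
    have h2 : (s - Finsupp.single j 1) + Finsupp.single j 1 = s := tsub_add_cancel_of_le h1
    have h3 : (s - Finsupp.single j 1).sum (fun _ e => e) + 1 = s.sum (fun _ e => e) := by
      conv_rhs => rw [← h2]
      rw [Finsupp.sum_add_index' (fun _ => rfl) (fun _ _ _ => rfl)]
      simp [Finsupp.sum_single_index]
    have h4 : s.sum (fun _ e => e) ≤ q.totalDegree := MvPolynomial.le_totalDegree hs
    simp only [Function.id_def] at *
    omega

lemma eval_eq_aeval {n : ℕ} (x : Fin n → ℝ) (p : MvPolynomial (Fin n) ℝ) :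
    MvPolynomial.eval x p = MvPolynomial.aeval x p := by
  rw [MvPolynomial.aeval_def, MvPolynomial.eval, MvPolynomial.eval₂Hom_congr rfl rfl rfl]
  rfl

lemma isPolyMap_comp {a b c : ℕ} {u : (Fin a → ℝ) → Fin b → ℝ}
    {v : (Fin b → ℝ) → Fin c → ℝ} (hu : IsPolyMap u) (hv : IsPolyMap v) :
    IsPolyMap (fun x => v (u x)) := by
  obtain ⟨P, hP⟩ := hu
  obtain ⟨Q, hQ⟩ := hv
  refine ⟨fun i => MvPolynomial.bind₁ P (Q i), fun x i => ?_⟩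
  have := MvPolynomial.aeval_bind₁ (S := ℝ) x P (Q i)
  show v (u x) i = _
  rw [hQ, SLaux.eval_eq_aeval, SLaux.eval_eq_aeval, this]
  have hux : u x = fun j => (aeval x) (P j) := funext fun j => by
    rw [hP, SLaux.eval_eq_aeval]
  rw [hux]

lemma isPolyMap_append {a b c : ℕ} {u : (Fin a → ℝ) → Fin b → ℝ}
    {v : (Fin a → ℝ) → Fin c → ℝ} (hu : IsPolyMap u) (hv : IsPolyMap v) :
    IsPolyMap (fun x => Fin.append (u x) (v x)) := by
  obtain ⟨P, hP⟩ := hu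
  obtain ⟨Q, hQ⟩ := hv
  refine ⟨fun l => Fin.addCases (fun j => P j) (fun i => Q i) l, fun x l => ?_⟩
  induction l using Fin.addCases with
  | left j => simp [Fin.append_left, hP]
  | right i => simp [Fin.append_right, hQ]

/-- The derivative of `t ↦ exp(tA) v`. -/
lemma hasDerivAt_expMulVec {m : ℕ} (A : Matrix (Fin m) (Fin m) ℝ) (v : Fin m → ℝ) (t : ℝ)
    (l : Fin m) :
    HasDerivAt (fun s => (NormedSpace.exp (s • A)).mulVec v l)
      (A.mulVec ((NormedSpace.exp (t • A)).mulVec v) l) t := by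
  have hE : HasDerivAt (fun s : ℝ => NormedSpace.exp (s • A))
      (A * NormedSpace.exp (t • A)) t := hasDerivAt_exp_smul_const' A t
  have key : ∀ (C : Matrix (Fin m) (Fin m) ℝ), C.mulVec v l = ∑ l', C l l' * v l' := by
    intro C; rfl
  have : HasDerivAt (fun s => ∑ l', (NormedSpace.exp (s • A)) l l' * v l')
      (∑ l', (A * NormedSpace.exp (t • A)) l l' * v l') t := by
    refine HasDerivAt.fun_sum fun l' _ => ?_
    have entry : ∀ (i j : Fin m), HasDerivAt (fun s => (NormedSpace.exp (s • A)) i j)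
        ((A * NormedSpace.exp (t • A)) i j) t := by
      intro i j
      let φ : Matrix (Fin m) (Fin m) ℝ →ₗ[ℝ] ℝ :=
        { toFun := fun C => C i j
          map_add' := fun _ _ => rfl
          map_smul' := fun _ _ => rfl }
      have hφ := (LinearMap.toContinuousLinearMap φ).hasFDerivAt (x := NormedSpace.exp (t • A))
      exact (hφ.comp_hasDerivAt t hE)
    exact (entry l l').mul_const (v l')
  have h2 : A.mulVec ((NormedSpace.exp (t • A)).mulVec v) l
      = ∑ l', (A * NormedSpace.exp (t • A)) l l' * v l' := by
    rw [Matrix.mulVec_mulVec]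
    rfl
  rw [h2]
  exact this

end SLaux

/-- Super-linearizability is preserved by elementary transformations. Working in `ℝ^{n+1}`:
let `φ(x) = (x₁, …, xₙ, x_{n+1} + g(x₁, …, xₙ))`, whose inverse is
`φ⁻¹(y) = (y₁, …, yₙ, y_{n+1} − g(y₁, …, yₙ))`. If `f` is a super-linearizable polynomial
vector field, then the transformed vector field `h(y) = Dφ(φ⁻¹(y)) · f(φ⁻¹(y))`, whose
components are `hᵢ(y) = fᵢ(φ⁻¹(y))` for `i ≤ n` and
`h_{n+1}(y) = f_{n+1}(φ⁻¹(y)) + Σᵢ (∂g/∂yᵢ)(y₁, …, yₙ) fᵢ(φ⁻¹(y))`,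
is super-linearizable. -/
theorem superlinearizable_of_elementary {n : ℕ}
    (f : (Fin (n + 1) → ℝ) → (Fin (n + 1) → ℝ))
    (hfpoly : IsPolyMap f) (hfsl : IsSuperLinearizable f)
    (g : MvPolynomial (Fin n) ℝ)
    (φinv : (Fin (n + 1) → ℝ) → (Fin (n + 1) → ℝ))
    (hφinv : ∀ y, φinv y = Function.update y (Fin.last n)
      (y (Fin.last n) - MvPolynomial.eval (fun i => y i.castSucc) g))
    (h : (Fin (n + 1) → ℝ) → (Fin (n + 1) → ℝ))
    (hh : ∀ (y : Fin (n + 1) → ℝ) (j : Fin (n + 1)), h y j =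
      if j = Fin.last n then
        f (φinv y) j + ∑ i : Fin n,
          MvPolynomial.eval (fun i' => y i'.castSucc) (MvPolynomial.pderiv i g) *
            f (φinv y) i.castSucc
      else f (φinv y) j) :
    IsSuperLinearizable h := by
  classical
  obtain ⟨k, A, p, hppoly, hA⟩ := hfsl
  set D := max 1 g.totalDegree with hD
  set G : MvPolynomial (Fin (n+1+k)) ℝ :=
    MvPolynomial.rename (fun i : Fin n => Fin.castAdd k i.castSucc) g with hG
  set q : Fin (n + 1) → MvPolynomial (Fin (n+1+k)) ℝ := fun j =>
    if j = Fin.last n then MvPolynomial.X (Fin.castAdd k j) + G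
    else MvPolynomial.X (Fin.castAdd k j) with hq
  set ℓ : Fin (n+1+k) → MvPolynomial (Fin (n+1+k)) ℝ :=
    fun l => ∑ i, MvPolynomial.C (A l i) * MvPolynomial.X i with hℓ
  set Lop : MvPolynomial (Fin (n+1+k)) ℝ →ₗ[ℝ] MvPolynomial (Fin (n+1+k)) ℝ :=
    ∑ l, (LinearMap.mulRight ℝ (ℓ l)).comp (MvPolynomial.pderiv l).toLinearMap with hLop
  have hLop_apply : ∀ r : MvPolynomial (Fin (n+1+k)) ℝ,
      Lop r = ∑ l, MvPolynomial.pderiv l r * ℓ l := by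
    intro r
    simp [hLop, LinearMap.sum_apply, LinearMap.mulRight_apply]
  have hl_deg : ∀ l, (ℓ l).totalDegree ≤ 1 := by
    intro l
    refine le_trans (MvPolynomial.totalDegree_finset_sum _ _) (Finset.sup_le fun i _ => ?_)
    refine le_trans (MvPolynomial.totalDegree_mul _ _) ?_
    simp [MvPolynomial.totalDegree_X]
  have hLop_deg : ∀ r : MvPolynomial (Fin (n+1+k)) ℝ, r.totalDegree ≤ D → (Lop r).totalDegree ≤ D := by
    intro r hr
    rw [hLop_apply]
    refine le_trans (MvPolynomial.totalDegree_finset_sum _ _) (Finset.sup_le fun l _ => ?_)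
    refine le_trans (MvPolynomial.totalDegree_mul _ _) ?_
    have h1 := SLaux.totalDegree_pderiv_le l r
    have h2 := hl_deg l
    have h3 : 1 ≤ D := le_max_left _ _
    omega
  set V := MvPolynomial.restrictTotalDegree (Fin (n+1+k)) ℝ D with hV
  have hLop_mem : ∀ r ∈ V, Lop r ∈ V := by
    intro r hr
    rw [hV, MvPolynomial.mem_restrictTotalDegree] at *
    exact hLop_deg r hr
  set Lop' : V →ₗ[ℝ] V := Lop.restrict hLop_mem with hLop'
  set M := Module.finrank ℝ V with hM
  set b : Module.Basis (Fin M) ℝ V := Module.finBasis ℝ V with hb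
  set B : Matrix (Fin M) (Fin M) ℝ := (LinearMap.toMatrix b b Lop')ᵀ with hB
  have hqV : ∀ j, q j ∈ V := by
    intro j
    rw [MvPolynomial.mem_restrictTotalDegree]
    rw [hq]
    by_cases hj : j = Fin.last n
    · simp only [hj, if_pos rfl]
      refine le_trans (MvPolynomial.totalDegree_add _ _) (max_le ?_ ?_)
      · simp [MvPolynomial.totalDegree_X, hD]
      · exact le_trans (MvPolynomial.totalDegree_rename_le _ _) (le_max_right _ _)
    · simp only [if_neg hj]
      simp [MvPolynomial.totalDegree_X, hD]
  set L : Matrix (Fin (n + 1)) (Fin M) ℝ := fun j i => b.repr ⟨q j, hqV j⟩ i with hL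
  set A' : Matrix (Fin ((n + 1) + M)) (Fin ((n + 1) + M)) ℝ := fun l l' =>
    Fin.addCases (fun j => Fin.addCases (fun _ => (0 : ℝ)) (fun i => (L * B) j i) l')
      (fun i => Fin.addCases (fun _ => (0 : ℝ)) (fun i' => B i i') l') l with hA'
  set p' : (Fin (n + 1) → ℝ) → Fin M → ℝ := fun y i =>
    MvPolynomial.eval (Fin.append (φinv y) (p (φinv y))) ((b i : MvPolynomial (Fin (n+1+k)) ℝ))
    with hp'
  have hA'row1 : ∀ (u : Fin ((n + 1) + M) → ℝ) (j : Fin (n + 1)),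
      A'.mulVec u (Fin.castAdd M j) = ∑ i, (L * B) j i * u (Fin.natAdd (n + 1) i) := by
    intro u j
    show (∑ l', A' (Fin.castAdd M j) l' * u l') = _
    rw [Fin.sum_univ_add]
    simp [hA']
  have hA'row2 : ∀ (u : Fin ((n + 1) + M) → ℝ) (i : Fin M),
      A'.mulVec u (Fin.natAdd (n + 1) i) = ∑ i', B i i' * u (Fin.natAdd (n + 1) i') := by
    intro u i
    show (∑ l', A' (Fin.natAdd (n + 1) i) l' * u l') = _
    rw [Fin.sum_univ_add]
    simp [hA']
  have hφpoly : IsPolyMap φinv := by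
    refine ⟨fun j => if j = Fin.last n then
        MvPolynomial.X (Fin.last n) - MvPolynomial.rename Fin.castSucc g
      else MvPolynomial.X j, fun x j => ?_⟩
    rw [hφinv]
    by_cases hj : j = Fin.last n
    · subst hj
      simp [MvPolynomial.eval_rename, Function.comp_def]
    · simp [hj, Function.update_of_ne hj]
  refine ⟨M, A', p', ?_, ?_⟩
  · -- p' is a polynomial map
    have h1 : IsPolyMap (fun y : Fin (n + 1) → ℝ => Fin.append (φinv y) (p (φinv y))) :=
      SLaux.isPolyMap_append hφpoly (SLaux.isPolyMap_comp hφpoly hppoly)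
    have h2 : IsPolyMap (fun w : Fin (n+1+k) → ℝ => fun i : Fin M =>
        MvPolynomial.eval w ((b i : MvPolynomial (Fin (n+1+k)) ℝ))) :=
      ⟨fun i => (b i : MvPolynomial (Fin (n+1+k)) ℝ), fun w i => rfl⟩
    exact SLaux.isPolyMap_comp h1 h2
  · intro y₀ y hy0 hy'
    -- the pulled-back solution of `f`
    have hupd : ∀ (Y : Fin (n + 1) → ℝ) (j : Fin (n + 1)), j ≠ Fin.last n → φinv Y j = Y j := by
      intro Y j hj
      rw [hφinv, Function.update_of_ne hj]
    have hupd' : ∀ Y : Fin (n + 1) → ℝ, φinv Y (Fin.last n)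
        = Y (Fin.last n) - MvPolynomial.eval (fun i => Y i.castSucc) g := by
      intro Y
      rw [hφinv, Function.update_self]
    have hcs : ∀ i : Fin n, (i.castSucc : Fin (n + 1)) ≠ Fin.last n :=
      fun i => (Fin.castSucc_lt_last i).ne
    have hx' : ∀ t : ℝ, 0 ≤ t → HasDerivAt (fun s => φinv (y s)) (f (φinv (y t))) t := by
      intro t ht
      have hyD := hasDerivAt_pi.mp (hy' t ht)
      rw [hasDerivAt_pi]
      intro j
      have hcomp : ∀ i : Fin n, h (y t) i.castSucc = f (φinv (y t)) i.castSucc := fun i => by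
        rw [hh, if_neg (hcs i)]
      by_cases hj : j = Fin.last n
      · subst hj
        have hgd := SLaux.hasDerivAt_eval g (fun s i => y s i.castSucc)
          (fun i => h (y t) i.castSucc) t (fun i => hyD i.castSucc)
        have hsub := (hyD (Fin.last n)).sub hgd
        have hfun : (fun s => φinv (y s) (Fin.last n))
            = fun s => y s (Fin.last n) - MvPolynomial.eval (fun i => y s i.castSucc) g :=
          funext fun s => hupd' (y s)
        rw [hfun]
        refine hsub.congr_deriv (Eq.symm ?_)
        rw [hh (y t) (Fin.last n), if_pos rfl]
        simp only [hcomp]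
        ring
      · have hfun : (fun s => φinv (y s) j) = fun s => y s j :=
          funext fun s => hupd (y s) j hj
        rw [hfun]
        have : h (y t) j = f (φinv (y t)) j := by rw [hh, if_neg hj]
        rw [← this]
        exact hyD j
    have hxz := hA (φinv y₀) (fun t => φinv (y t)) (by show φinv (y 0) = φinv y₀; rw [hy0]) hx'
    set v : Fin (n+1+k) → ℝ := Fin.append (φinv y₀) (p (φinv y₀)) with hv
    set z : ℝ → Fin (n+1+k) → ℝ := fun t => (NormedSpace.exp (t • A)).mulVec v with hz
    have hz' : ∀ (t : ℝ) (l : Fin (n+1+k)), HasDerivAt (fun s => z s l) (A.mulVec (z t) l) t :=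
      fun t l => SLaux.hasDerivAt_expMulVec A v t l
    set c : ℝ → Fin M → ℝ := fun t i =>
      MvPolynomial.eval (z t) ((b i : MvPolynomial (Fin (n+1+k)) ℝ)) with hc
    have hevalLop : ∀ (r : MvPolynomial (Fin (n+1+k)) ℝ) (t : ℝ),
        MvPolynomial.eval (z t) (Lop r)
          = ∑ l, MvPolynomial.eval (z t) (MvPolynomial.pderiv l r) * A.mulVec (z t) l := by
      intro r t
      rw [hLop_apply, map_sum]
      refine Finset.sum_congr rfl fun l _ => ?_
      rw [eval_mul]
      congr 1
      show MvPolynomial.eval (z t) (∑ i, MvPolynomial.C (A l i) * MvPolynomial.X i) = _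
      rw [map_sum]
      simp only [eval_mul, eval_C, eval_X]
      rfl
    have hBc : ∀ (t : ℝ) (i : Fin M), B.mulVec (c t) i
        = MvPolynomial.eval (z t) (Lop ((b i : MvPolynomial (Fin (n+1+k)) ℝ))) := by
      intro t i
      have h1 : Lop ((b i : MvPolynomial (Fin (n+1+k)) ℝ)) = ((Lop' (b i) : V) : MvPolynomial (Fin (n+1+k)) ℝ) := rfl
      have h2 : Lop' (b i) = ∑ j, (LinearMap.toMatrix b b Lop') j i • b j := by
        conv_lhs => rw [← Module.Basis.sum_repr b (Lop' (b i))]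
        refine Finset.sum_congr rfl fun j _ => ?_
        rw [LinearMap.toMatrix_apply]
      rw [h1, h2]
      have h3 : ((∑ j, (LinearMap.toMatrix b b Lop') j i • b j : V) : MvPolynomial (Fin (n+1+k)) ℝ)
          = ∑ j, (LinearMap.toMatrix b b Lop') j i • ((b j : MvPolynomial (Fin (n+1+k)) ℝ)) := by
        simp
      rw [h3, map_sum]
      show (∑ j, B i j * c t j) = _
      refine Finset.sum_congr rfl fun j _ => ?_
      rw [MvPolynomial.smul_eval]
      rfl
    have hc' : ∀ (t : ℝ) (i : Fin M), HasDerivAt (fun s => c s i) (B.mulVec (c t) i) t := by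
      intro t i
      have := SLaux.hasDerivAt_eval ((b i : MvPolynomial (Fin (n+1+k)) ℝ)) z (A.mulVec (z t)) t
        (hz' t)
      rw [hBc, hevalLop]
      exact this
    have hyz : ∀ t : ℝ, 0 ≤ t → ∀ j, y t j = MvPolynomial.eval (z t) (q j) := by
      intro t ht j
      have hxz' : ∀ i : Fin (n + 1), z t (Fin.castAdd k i) = φinv (y t) i := fun i => hxz t ht i
      by_cases hj : j = Fin.last n
      · subst hj
        show y t (Fin.last n) = MvPolynomial.eval (z t)
          (if Fin.last n = Fin.last n then MvPolynomial.X (Fin.castAdd k (Fin.last n)) + G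
            else MvPolynomial.X (Fin.castAdd k (Fin.last n)))
        rw [if_pos rfl, eval_add, eval_X, hG, MvPolynomial.eval_rename, hxz' (Fin.last n),
          hupd' (y t)]
        have : ∀ i : Fin n, (z t ∘ fun i : Fin n => Fin.castAdd k i.castSucc) i
            = y t i.castSucc := by
          intro i
          show z t (Fin.castAdd k i.castSucc) = _
          rw [hxz' i.castSucc, hupd _ _ (hcs i)]
        rw [show (z t ∘ fun i : Fin n => Fin.castAdd k i.castSucc) = fun i => y t i.castSucc
          from funext this]
        ring
      · show y t j = MvPolynomial.eval (z t)
          (if j = Fin.last n then MvPolynomial.X (Fin.castAdd k j) + G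
            else MvPolynomial.X (Fin.castAdd k j))
        rw [if_neg hj, eval_X, hxz' j, hupd _ j hj]
    have hqsum : ∀ j, (∑ m, L j m • ((b m : MvPolynomial (Fin (n+1+k)) ℝ))) = q j := by
      intro j
      have hsum := Module.Basis.sum_repr b ⟨q j, hqV j⟩
      calc (∑ m, L j m • ((b m : MvPolynomial (Fin (n+1+k)) ℝ)))
          = ((∑ m, b.repr ⟨q j, hqV j⟩ m • b m : V) : MvPolynomial (Fin (n+1+k)) ℝ) := by
            simp only [Submodule.coe_sum, Submodule.coe_smul, hL]
        _ = q j := by rw [hsum]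
    have hLBc : ∀ (t : ℝ) (j : Fin (n + 1)),
        (L * B).mulVec (c t) j = MvPolynomial.eval (z t) (Lop (q j)) := by
      intro t j
      rw [← Matrix.mulVec_mulVec]
      show (∑ m, L j m * B.mulVec (c t) m) = _
      rw [← hqsum j, map_sum, map_sum]
      refine Finset.sum_congr rfl fun m _ => ?_
      rw [LinearMap.map_smul, MvPolynomial.smul_eval, hBc]
    have hkey : ∀ t : ℝ, 0 ≤ t → ∀ j : Fin (n + 1),
        h (y t) j = (L * B).mulVec (c t) j := by
      intro t ht j
      rw [hLBc]
      have he : HasDerivAt (fun s => MvPolynomial.eval (z s) (q j))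
          (MvPolynomial.eval (z t) (Lop (q j))) t := by
        have := SLaux.hasDerivAt_eval (q j) z (A.mulVec (z t)) t (hz' t)
        rw [hevalLop]
        exact this
      have h1 : HasDerivWithinAt (fun s => y s j) (MvPolynomial.eval (z t) (Lop (q j)))
          (Set.Ici 0) t :=
        (he.hasDerivWithinAt).congr (fun s hs => hyz s hs j) (hyz t ht j)
      have h2 : HasDerivWithinAt (fun s => y s j) (h (y t) j) (Set.Ici 0) t :=
        ((hasDerivAt_pi.mp (hy' t ht)) j).hasDerivWithinAt
      exact (uniqueDiffOn_Ici 0 t (Set.mem_Ici.2 ht)).eq_deriv _ h2 h1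
    set W : ℝ → Fin ((n + 1) + M) → ℝ := fun t => Fin.append (y t) (c t) with hW
    have hW' : ∀ t : ℝ, 0 ≤ t → HasDerivAt W (A'.mulVec (W t)) t := by
      intro t ht
      rw [hasDerivAt_pi]
      intro l
      have hWl : ∀ (s : ℝ) (j : Fin (n + 1)), W s (Fin.castAdd M j) = y s j :=
        fun s j => Fin.append_left _ _ j
      have hWr : ∀ (s : ℝ) (i : Fin M), W s (Fin.natAdd (n + 1) i) = c s i :=
        fun s i => Fin.append_right _ _ i
      induction l using Fin.addCases with
      | left j =>
          have hval : A'.mulVec (W t) (Fin.castAdd M j) = h (y t) j := by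
            rw [hA'row1, hkey t ht j]
            show _ = ∑ i, (L * B) j i * c t i
            refine Finset.sum_congr rfl fun i _ => ?_
            rw [hWr]
          rw [show (fun s => W s (Fin.castAdd M j)) = fun s => y s j from funext fun s => hWl s j,
            hval]
          exact (hasDerivAt_pi.mp (hy' t ht)) j
      | right i =>
          have hval : A'.mulVec (W t) (Fin.natAdd (n + 1) i) = B.mulVec (c t) i := by
            rw [hA'row2]
            show _ = ∑ i', B i i' * c t i'
            refine Finset.sum_congr rfl fun i' _ => ?_
            rw [hWr]
          rw [show (fun s => W s (Fin.natAdd (n + 1) i)) = fun s => c s i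
            from funext fun s => hWr s i, hval]
          exact hc' t i
    set w : ℝ → Fin ((n + 1) + M) → ℝ :=
      fun s => (NormedSpace.exp (s • A')).mulVec (W 0) with hw
    have hw' : ∀ t : ℝ, HasDerivAt w (A'.mulVec (w t)) t := by
      intro t
      rw [hasDerivAt_pi]
      intro l
      exact SLaux.hasDerivAt_expMulVec A' (W 0) t l
    have hw0 : w 0 = W 0 := by
      rw [hw]
      simp [zero_smul, NormedSpace.exp_zero, Matrix.one_mulVec]
    have hlip : LipschitzWith ‖(LinearMap.toContinuousLinearMap A'.mulVecLin)‖₊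
        (fun u : Fin ((n + 1) + M) → ℝ => A'.mulVec u) := by
      have := (LinearMap.toContinuousLinearMap A'.mulVecLin).lipschitz
      have hfun : ⇑(LinearMap.toContinuousLinearMap A'.mulVecLin)
          = fun u : Fin ((n + 1) + M) → ℝ => A'.mulVec u := by
        funext u
        simp [Matrix.mulVecLin_apply]
      rwa [hfun] at this
    have hEq : ∀ T : ℝ, 0 ≤ T → Set.EqOn w W (Set.Icc 0 T) := by
      intro T hT
      refine ODE_solution_unique (v := fun _ u => A'.mulVec u) (hv := fun _ => hlip)
        (fun s hs => (hw' s).continuousAt.continuousWithinAt)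
        (fun s hs => (hw' s).hasDerivWithinAt)
        (fun s hs => (hW' s hs.1).continuousAt.continuousWithinAt)
        (fun s hs => (hW' s hs.1).hasDerivWithinAt) hw0
    have hinit : Fin.append y₀ (p' y₀) = W 0 := by
      have hz0 : z 0 = v := by
        rw [hz]
        simp [NormedSpace.exp_zero]
      funext l
      induction l using Fin.addCases with
      | left j =>
          show Fin.append y₀ (p' y₀) (Fin.castAdd M j)
            = Fin.append (y 0) (c 0) (Fin.castAdd M j)
          rw [Fin.append_left, Fin.append_left, hy0]
      | right i =>
          show Fin.append y₀ (p' y₀) (Fin.natAdd (n + 1) i)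
            = Fin.append (y 0) (c 0) (Fin.natAdd (n + 1) i)
          rw [Fin.append_right, Fin.append_right]
          show p' y₀ i = MvPolynomial.eval (z 0) ((b i : MvPolynomial (Fin (n+1+k)) ℝ))
          rw [hz0]
    intro t ht j
    have hwt := hEq t ht (Set.mem_Icc.2 ⟨ht, le_refl t⟩)
    rw [hinit]
    show w t (Fin.castAdd M j) = y t j
    rw [hwt]
    exact Fin.append_left (y t) (c t) j
end

section
/- Let M = (a_{ij}) ∈ ℝ^{n×n}, let g be a real polynomial in n−1 variables, let φ(x) = (x₁, …, x_{n−1}, xₙ + g(x₁, …, x_{n−1})) be the corresponding elementary transformation of ℝⁿ, and let h : ℝⁿ → ℝⁿ be the vector field obtained from the linear system ẋ = Mx by the change of variables y = φ(x), i.e., h(y) = Dφ(φ⁻¹(y)) · M · φ⁻¹(y). Then there exist a polynomial p : ℝⁿ → ℝ and a polynomial vector field F : ℝ^{n+1} → ℝ^{n+1} satisfying the WDG condition such that F is a lift of h by p: for every y₀ ∈ ℝⁿ, every differentiable curve z : ℝ → ℝ^{n+1} with z(0) = (y₀, p(y₀)) and z'(t) = F(z(t)) for all t ≥ 0, and every differentiable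 curve y : ℝ → ℝⁿ with y(0) = y₀ and y'(t) = h(y(t)) for all t ≥ 0, one has Π_n(z(t)) = y(t) for all t ≥ 0. -/
open Matrix MvPolynomial

/-- The partial derivative of `h : ℝⁿ → ℝ` with respect to the `j`-th coordinate. -/
noncomputable def pd {n : ℕ} (h : (Fin n → ℝ) → ℝ) (j : Fin n) : (Fin n → ℝ) → ℝ :=
  fun x => fderiv ℝ h x (Pi.single j 1)

/-- The WDG (weighted dependency graph) condition for a vector field `h : ℝⁿ → ℝⁿ`:
along every cycle `i₀, i₁, …, i_m = i₀` (m ≥ 1) all of whose edge weights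
`∂h_{i_{ℓ+1}}/∂x_{i_ℓ}` are nonzero, the product of the edge weights is constant. -/
def SatisfiesWDG {n : ℕ} (h : (Fin n → ℝ) → (Fin n → ℝ)) : Prop :=
  ∀ m : ℕ, 1 ≤ m → ∀ c : ℕ → Fin n, c m = c 0 →
    (∀ ℓ < m, pd (fun x => h x (c (ℓ + 1))) (c ℓ) ≠ 0) →
    ∃ r : ℝ, ∀ x : Fin n → ℝ,
      (∏ ℓ ∈ Finset.range m, pd (fun x' => h x' (c (ℓ + 1))) (c ℓ) x) = r

lemma eval_hasFDerivAt {N : ℕ} (q : MvPolynomial (Fin N) ℝ) (x : Fin N → ℝ) :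
    HasFDerivAt (fun v : Fin N → ℝ => MvPolynomial.eval v q)
      (∑ j, MvPolynomial.eval x (pderiv j q) • (ContinuousLinearMap.proj j :
        (Fin N → ℝ) →L[ℝ] ℝ)) x := by
  induction q using MvPolynomial.induction_on with
  | C a => simpa [pderiv_C] using hasFDerivAt_const a x
  | add p q hp hq =>
      have := hp.add hq
      simp only [map_add, add_smul, Finset.sum_add_distrib]
      exact this
  | mul_X p i hp =>
      have h2 : HasFDerivAt (fun v : Fin N → ℝ => v i)
          (ContinuousLinearMap.proj i : (Fin N → ℝ) →L[ℝ] ℝ) x :=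
        (ContinuousLinearMap.proj i : (Fin N → ℝ) →L[ℝ] ℝ).hasFDerivAt
      have hmul := hp.mul h2
      have hfun : (fun v : Fin N → ℝ => MvPolynomial.eval v (p * X i))
          = fun v => MvPolynomial.eval v p * v i := by
        funext v; simp
      have key : (∑ j, MvPolynomial.eval x (pderiv j (p * X i)) •
            (ContinuousLinearMap.proj j : (Fin N → ℝ) →L[ℝ] ℝ))
          = (MvPolynomial.eval x p) • (ContinuousLinearMap.proj i : (Fin N → ℝ) →L[ℝ] ℝ)
            + x i • ∑ j, MvPolynomial.eval x (pderiv j p) •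
              (ContinuousLinearMap.proj j : (Fin N → ℝ) →L[ℝ] ℝ) := by
        simp only [pderiv_mul, pderiv_X, eval_add, eval_mul, eval_X, add_smul]
        rw [Finset.sum_add_distrib, add_comm]
        congr 1
        · rw [Finset.sum_eq_single i (fun j _ hne => ?_) (by simp)]
          · simp
          · rw [Pi.single_apply, if_neg (Ne.symm hne)]
            simp
        · rw [Finset.smul_sum]
          refine Finset.sum_congr rfl fun j _ => ?_
          rw [smul_smul, mul_comm]
      rw [key, hfun]
      exact hmul

lemma pd_eval {N : ℕ} (q : MvPolynomial (Fin N) ℝ) (j : Fin N) (x : Fin N → ℝ) :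
    pd (fun v => MvPolynomial.eval v q) j x = MvPolynomial.eval x (pderiv j q) := by
  rw [pd, (eval_hasFDerivAt q x).fderiv]
  simp [ContinuousLinearMap.proj, Pi.single_apply]

namespace LESO

def emb (n : ℕ) : Fin (n + 1) → Fin (n + 2) := fun k =>
  if k = Fin.last n then Fin.last (n + 1) else k.castSucc

def idxn (n : ℕ) : Fin (n + 2) := (Fin.last n).castSucc

lemma emb_ne_idxn {n : ℕ} (k : Fin (n + 1)) : emb n k ≠ idxn n := by
  unfold emb idxn
  split
  · intro hc
    have := congrArg Fin.val hc
    simp [Fin.val_last] at this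
  · rename_i hk
    intro hc
    exact hk (Fin.castSucc_injective _ hc)

def dd (n : ℕ) : Fin (n + 2) → Fin (n + 1) := fun i =>
  if h : (i : ℕ) < n + 1 then ⟨i, h⟩ else Fin.last n

lemma dd_emb {n : ℕ} (k : Fin (n + 1)) : dd n (emb n k) = k := by
  unfold dd emb
  by_cases hk : k = Fin.last n
  · subst hk
    rw [if_pos rfl, dif_neg (by simp)]
  · rw [if_neg hk]
    have hlt : ((k.castSucc : Fin (n+2)) : ℕ) < n + 1 := by
      simp [Fin.coe_castSucc, k.isLt]
    rw [dif_pos hlt]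
    exact Fin.ext (by simp)

lemma dd_idxn {n : ℕ} : dd n (idxn n) = Fin.last n := by
  unfold dd idxn
  rw [dif_pos (by simp)]
  exact Fin.ext (by simp)

lemma emb_castSucc {n : ℕ} (k : Fin (n + 1)) (hk : k ≠ Fin.last n) :
    emb n k = k.castSucc := if_neg hk

lemma emb_last {n : ℕ} : emb n (Fin.last n) = Fin.last (n + 1) := if_pos rfl

noncomputable def Lin (n : ℕ) (M : Matrix (Fin (n+1)) (Fin (n+1)) ℝ) (j : Fin (n + 1)) :
    MvPolynomial (Fin (n + 2)) ℝ :=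
  ∑ k, C (M j k) * X (emb n k)

def cc (n : ℕ) : Fin n → Fin (n + 2) := fun j => j.castSucc.castSucc

noncomputable def Pdef (n : ℕ) (M : Matrix (Fin (n+1)) (Fin (n+1)) ℝ)
    (g : MvPolynomial (Fin n) ℝ) (i : Fin (n + 2)) : MvPolynomial (Fin (n + 2)) ℝ :=
  Lin n M (dd n i) + if i = idxn n then
    ∑ k : Fin n, rename (cc n) (pderiv k g) * Lin n M k.castSucc
  else 0

def ee (n : ℕ) (w : Fin (n + 2) → ℝ) : Fin (n + 1) → ℝ := fun k => w (emb n k)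

lemma eval_Lin {n : ℕ} (M : Matrix (Fin (n+1)) (Fin (n+1)) ℝ) (w : Fin (n+2) → ℝ)
    (j : Fin (n + 1)) : MvPolynomial.eval w (Lin n M j) = M.mulVec (ee n w) j := by
  simp [Lin, Matrix.mulVec, dotProduct, ee]

lemma pderiv_Lin {n : ℕ} (M : Matrix (Fin (n+1)) (Fin (n+1)) ℝ) (j : Fin (n + 2))
    (k : Fin (n + 1)) :
    pderiv j (Lin n M k) = C (∑ l, if emb n l = j then M k l else 0) := by
  unfold Lin
  rw [map_sum, map_sum]
  refine Finset.sum_congr rfl fun l _ => ?_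
  rw [pderiv_C_mul, pderiv_X, Pi.single_apply]
  split <;> simp

lemma pderiv_idxn_Lin {n : ℕ} (M : Matrix (Fin (n+1)) (Fin (n+1)) ℝ) (k : Fin (n + 1)) :
    pderiv (idxn n) (Lin n M k) = 0 := by
  rw [pderiv_Lin]
  rw [Finset.sum_eq_zero fun l _ => if_neg (emb_ne_idxn l)]
  simp

lemma pderiv_idxn_rename {n : ℕ} (q : MvPolynomial (Fin n) ℝ) :
    pderiv (idxn n) (rename (cc n) q) = 0 := by
  apply pderiv_eq_zero_of_notMem_vars
  intro hmem
  obtain ⟨i, _, hi⟩ := MvPolynomial.mem_vars_rename _ _ hmem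
  have := congrArg Fin.val hi
  simp [cc, idxn] at this
  omega

lemma pderiv_idxn_Pdef {n : ℕ} (M : Matrix (Fin (n+1)) (Fin (n+1)) ℝ)
    (g : MvPolynomial (Fin n) ℝ) (i : Fin (n + 2)) :
    pderiv (idxn n) (Pdef n M g i) = 0 := by
  unfold Pdef
  rw [map_add, pderiv_idxn_Lin]
  split
  · rw [map_sum, Finset.sum_eq_zero fun k _ => ?_]
    · simp
    · rw [pderiv_mul, pderiv_idxn_rename, pderiv_idxn_Lin]
      simp
  · simp

lemma pd_F_idxn {n : ℕ} (M : Matrix (Fin (n+1)) (Fin (n+1)) ℝ)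
    (g : MvPolynomial (Fin n) ℝ) (i : Fin (n + 2)) (x : Fin (n+2) → ℝ) :
    pd (fun w => MvPolynomial.eval w (Pdef n M g i)) (idxn n) x = 0 := by
  rw [pd_eval, pderiv_idxn_Pdef]
  simp

lemma pd_F_const {n : ℕ} (M : Matrix (Fin (n+1)) (Fin (n+1)) ℝ)
    (g : MvPolynomial (Fin n) ℝ) {i : Fin (n + 2)} (hi : i ≠ idxn n)
    (j : Fin (n + 2)) (x : Fin (n+2) → ℝ) :
    pd (fun w => MvPolynomial.eval w (Pdef n M g i)) j x
      = pd (fun w => MvPolynomial.eval w (Pdef n M g i)) j 0 := by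
  rw [pd_eval, pd_eval]
  unfold Pdef
  rw [if_neg hi, add_zero, pderiv_Lin]
  simp

theorem wdg_F {n : ℕ} (M : Matrix (Fin (n+1)) (Fin (n+1)) ℝ)
    (g : MvPolynomial (Fin n) ℝ) :
    SatisfiesWDG (fun w i => MvPolynomial.eval w (Pdef n M g i)) := by
  intro m hm c hc hnz
  have hlt : ∀ ℓ < m, c ℓ ≠ idxn n := by
    intro ℓ hℓ hbad
    exact hnz ℓ hℓ (funext fun x => hbad ▸ pd_F_idxn M g (c (ℓ + 1)) x)
  have hle : ∀ ℓ ≤ m, c ℓ ≠ idxn n := by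
    intro ℓ hℓ
    rcases eq_or_lt_of_le hℓ with rfl | hℓ'
    · rw [hc]; exact hlt 0 hm
    · exact hlt ℓ hℓ'
  refine ⟨∏ ℓ ∈ Finset.range m,
      pd (fun x' => MvPolynomial.eval x' (Pdef n M g (c (ℓ + 1)))) (c ℓ) 0, fun x => ?_⟩
  refine Finset.prod_congr rfl fun ℓ hℓ => ?_
  rw [Finset.mem_range] at hℓ
  exact pd_F_const M g (hle (ℓ + 1) hℓ) (c ℓ) x

noncomputable def projCLM (n : ℕ) : (Fin (n + 1) → ℝ) →L[ℝ] (Fin n → ℝ) :=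
  ContinuousLinearMap.pi fun k => ContinuousLinearMap.proj k.castSucc

noncomputable def DG {n : ℕ} (g : MvPolynomial (Fin n) ℝ) (v : Fin n → ℝ) :
    (Fin (n + 1) → ℝ) →L[ℝ] ℝ :=
  ∑ k, (MvPolynomial.eval v (pderiv k g)) • (ContinuousLinearMap.proj k.castSucc :
    (Fin (n+1) → ℝ) →L[ℝ] ℝ)

noncomputable def Dphi {n : ℕ} (g : MvPolynomial (Fin n) ℝ) (v : Fin n → ℝ) :
    (Fin (n + 1) → ℝ) →L[ℝ] (Fin (n + 1) → ℝ) :=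
  ContinuousLinearMap.id ℝ _ + (DG g v).smulRight (Pi.single (Fin.last n) 1)

lemma Dphi_apply {n : ℕ} (g : MvPolynomial (Fin n) ℝ) (v : Fin n → ℝ)
    (u : Fin (n+1) → ℝ) (i : Fin (n+1)) :
    Dphi g v u i = u i + (if i = Fin.last n then
      ∑ k, MvPolynomial.eval v (pderiv k g) * u k.castSucc else 0) := by
  simp only [Dphi, DG, ContinuousLinearMap.add_apply, ContinuousLinearMap.id_apply,
    ContinuousLinearMap.smulRight_apply, ContinuousLinearMap.coe_sum', Finset.sum_apply,
    ContinuousLinearMap.coe_smul', Pi.smul_apply, ContinuousLinearMap.proj_apply,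
    Pi.add_apply, smul_eq_mul, Pi.single_apply]
  split <;> simp [Finset.sum_mul]

lemma phi_hasFDerivAt {n : ℕ} (g : MvPolynomial (Fin n) ℝ)
    (φ : (Fin (n + 1) → ℝ) → (Fin (n + 1) → ℝ))
    (hφ : ∀ x, φ x = Function.update x (Fin.last n)
      (x (Fin.last n) + MvPolynomial.eval (fun i => x i.castSucc) g))
    (x : Fin (n + 1) → ℝ) :
    HasFDerivAt φ (Dphi g (fun j => x j.castSucc)) x := by
  have hrw : φ = fun x : Fin (n+1) → ℝ =>
      x + (MvPolynomial.eval (fun j => x j.castSucc) g) •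
        (Pi.single (Fin.last n) (1 : ℝ) : Fin (n+1) → ℝ) := by
    funext w
    rw [hφ]
    funext i
    rw [Function.update_apply]
    by_cases hi : i = Fin.last n
    · subst hi; simp
    · simp [hi, Pi.single_apply]
  rw [hrw]
  have hG : HasFDerivAt (fun w : Fin (n+1) → ℝ => MvPolynomial.eval (fun j => w j.castSucc) g)
      (DG g (fun j => x j.castSucc)) x := by
    have hcomp := (eval_hasFDerivAt g (fun j => x j.castSucc)).comp x (projCLM n).hasFDerivAt
    have h1 : (fun v : Fin n → ℝ => MvPolynomial.eval v g) ∘ (projCLM n)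
        = fun w : Fin (n+1) → ℝ => MvPolynomial.eval (fun j => w j.castSucc) g := rfl
    have h2 : (∑ j, MvPolynomial.eval (fun j => x j.castSucc) (pderiv j g) •
        (ContinuousLinearMap.proj j : (Fin n → ℝ) →L[ℝ] ℝ)).comp (projCLM n)
        = DG g (fun j => x j.castSucc) := by
      ext u
      simp [DG, projCLM, ContinuousLinearMap.comp_apply]
    rw [h1, h2] at hcomp
    exact hcomp
  exact (hasFDerivAt_id x).add (hG.smul_const _)

end LESO

/-- Transforming a linear system `ẋ = Mx` on `ℝ^{n+1}` by an elementary transformation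
`φ(x) = (x₁, …, xₙ, x_{n+1} + g(x₁, …, xₙ))` yields a vector field
`h(y) = Dφ(φ⁻¹(y))·M·φ⁻¹(y)` which, after adding one stabilizing polynomial observable `p`,
lifts to a polynomial vector field `F` on `ℝ^{n+2}` satisfying the WDG condition. -/
theorem linear_elementary_stabilizing_observable {n : ℕ}
    (M : Matrix (Fin (n + 1)) (Fin (n + 1)) ℝ)
    (g : MvPolynomial (Fin n) ℝ)
    (φ φinv : (Fin (n + 1) → ℝ) → (Fin (n + 1) → ℝ))
    (hφ : ∀ x, φ x = Function.update x (Fin.last n)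
      (x (Fin.last n) + MvPolynomial.eval (fun i => x i.castSucc) g))
    (hφinv : ∀ y, φinv y = Function.update y (Fin.last n)
      (y (Fin.last n) - MvPolynomial.eval (fun i => y i.castSucc) g))
    (h : (Fin (n + 1) → ℝ) → (Fin (n + 1) → ℝ))
    (hh : ∀ y, h y = fderiv ℝ φ (φinv y) (M.mulVec (φinv y))) :
    ∃ (p : MvPolynomial (Fin (n + 1)) ℝ)
      (F : (Fin (n + 2) → ℝ) → (Fin (n + 2) → ℝ)),
      IsPolyMap F ∧ SatisfiesWDG F ∧
      ∀ (y₀ : Fin (n + 1) → ℝ) (z : ℝ → (Fin (n + 2) → ℝ)) (y : ℝ → (Fin (n + 1) → ℝ)),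
        z 0 = Fin.snoc y₀ (MvPolynomial.eval y₀ p) →
        (∀ t : ℝ, 0 ≤ t → HasDerivAt z (F (z t)) t) →
        y 0 = y₀ →
        (∀ t : ℝ, 0 ≤ t → HasDerivAt y (h (y t)) t) →
        ∀ t : ℝ, 0 ≤ t → ∀ i : Fin (n + 1), z t i.castSucc = y t i := by
  classical
  refine ⟨X (Fin.last n) - rename Fin.castSucc g,
    fun w i => MvPolynomial.eval w (LESO.Pdef n M g i),
    ⟨LESO.Pdef n M g, fun _ _ => rfl⟩, LESO.wdg_F M g, ?_⟩
  intro y₀ z y hz0 hz hy0 hy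
  have hcs : ∀ j : Fin n, (j.castSucc : Fin (n+1)) ≠ Fin.last n :=
    fun j => (Fin.castSucc_lt_last j).ne
  have hinv_ne : ∀ (w : Fin (n+1) → ℝ) (k : Fin (n+1)), k ≠ Fin.last n → φinv w k = w k := by
    intro w k hk
    rw [hφinv, Function.update_apply, if_neg hk]
  have hinv_last : ∀ w : Fin (n+1) → ℝ, φinv w (Fin.last n)
      = w (Fin.last n) - MvPolynomial.eval (fun j => w j.castSucc) g := by
    intro w; rw [hφinv]; simp
  have hform : ∀ (w : Fin (n+1) → ℝ) (i : Fin (n+1)), h w i = M.mulVec (φinv w) i +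
      (if i = Fin.last n then ∑ k, MvPolynomial.eval (fun j => w j.castSucc) (pderiv k g) *
        M.mulVec (φinv w) k.castSucc else 0) := by
    intro w i
    have harg : (fun j : Fin n => φinv w j.castSucc) = fun j => w j.castSucc :=
      funext fun j => hinv_ne w j.castSucc (hcs j)
    rw [hh, (LESO.phi_hasFDerivAt g φ hφ (φinv w)).fderiv, harg, LESO.Dphi_apply]
  have hmul_ne : ∀ (w : Fin (n+1) → ℝ) (k : Fin (n+1)), k ≠ Fin.last n →
      h w k = M.mulVec (φinv w) k := by
    intro w k hk
    rw [hform, if_neg hk, add_zero]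
  -- the two comparison curves
  set U : ℝ → Fin (n+1) → ℝ := fun s => LESO.ee n (z s) with hUdef
  set Xc : ℝ → Fin (n+1) → ℝ := fun s => φinv (y s) with hXdef
  have hF_emb : ∀ (w : Fin (n+2) → ℝ) (k : Fin (n+1)),
      MvPolynomial.eval w (LESO.Pdef n M g (LESO.emb n k)) = M.mulVec (LESO.ee n w) k := by
    intro w k
    unfold LESO.Pdef
    rw [if_neg (LESO.emb_ne_idxn k), add_zero, LESO.eval_Lin, LESO.dd_emb]
  have hDU : ∀ s : ℝ, 0 ≤ s → HasDerivAt U (M.mulVec (U s)) s := by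
    intro s hs
    rw [hasDerivAt_pi]
    intro k
    have hk := hasDerivAt_pi.1 (hz s hs) (LESO.emb n k)
    beta_reduce at hk
    rw [hF_emb] at hk
    exact hk
  have hDX : ∀ s : ℝ, 0 ≤ s → HasDerivAt Xc (M.mulVec (Xc s)) s := by
    intro s hs
    rw [hasDerivAt_pi]
    intro k
    have hyk : ∀ j, HasDerivAt (fun t => y t j) (h (y s) j) s := hasDerivAt_pi.1 (hy s hs)
    by_cases hk : k = Fin.last n
    · subst hk
      have hyy : HasDerivAt (fun t => (fun j : Fin n => y t j.castSucc))
          (fun j : Fin n => h (y s) j.castSucc) s := hasDerivAt_pi.2 fun j => hyk j.castSucc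
      have hev : HasDerivAt (fun t => MvPolynomial.eval (fun j : Fin n => y t j.castSucc) g)
          (∑ j, MvPolynomial.eval (fun j : Fin n => y s j.castSucc) (pderiv j g) *
            h (y s) j.castSucc) s := by
        have := (eval_hasFDerivAt g (fun j : Fin n => y s j.castSucc)).comp_hasDerivAt s hyy
        refine this.congr_deriv ?_
        simp
      have hsub := (hyk (Fin.last n)).sub hev
      have hfun : (fun t => Xc t (Fin.last n))
          = fun t => y t (Fin.last n) -
            MvPolynomial.eval (fun j : Fin n => y t j.castSucc) g :=
        funext fun t => hinv_last (y t)
      have hval : M.mulVec (Xc s) (Fin.last n) = h (y s) (Fin.last n) -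
          ∑ j, MvPolynomial.eval (fun j : Fin n => y s j.castSucc) (pderiv j g) *
            h (y s) j.castSucc := by
        have hsum : (∑ j, MvPolynomial.eval (fun j : Fin n => y s j.castSucc) (pderiv j g) *
            h (y s) j.castSucc) = ∑ j, MvPolynomial.eval (fun j : Fin n => y s j.castSucc)
              (pderiv j g) * M.mulVec (φinv (y s)) j.castSucc :=
          Finset.sum_congr rfl fun j _ => by rw [hmul_ne (y s) j.castSucc (hcs j)]
        rw [hform, if_pos rfl, hsum]
        ring
      rw [show (fun t => Xc t (Fin.last n)) = _ from hfun, hval]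
      exact hsub
    · have hfun : (fun t => Xc t k) = fun t => y t k :=
        funext fun t => hinv_ne (y t) k hk
      rw [show (fun t => Xc t k) = _ from hfun, show M.mulVec (Xc s) k = h (y s) k from
        (hmul_ne (y s) k hk).symm]
      exact hyk k
  have hU0 : U 0 = Xc 0 := by
    funext k
    show z 0 (LESO.emb n k) = φinv (y 0) k
    rw [hz0, hy0]
    by_cases hk : k = Fin.last n
    · subst hk
      rw [LESO.emb_last, hinv_last, Fin.snoc_last]
      simp [eval_rename]
      rfl
    · rw [LESO.emb_castSucc k hk, hinv_ne _ _ hk, Fin.snoc_castSucc]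
  have hlip : LipschitzWith ‖LinearMap.toContinuousLinearMap (Matrix.mulVecLin M)‖₊
      (fun w : Fin (n+1) → ℝ => M.mulVec w) := by
    have hfun : (fun w : Fin (n+1) → ℝ => M.mulVec w)
        = ⇑(LinearMap.toContinuousLinearMap (Matrix.mulVecLin M)) := by
      funext w; simp
    rw [hfun]
    exact (LinearMap.toContinuousLinearMap (Matrix.mulVecLin M)).lipschitz
  have hEq : ∀ T : ℝ, 0 ≤ T → Set.EqOn U Xc (Set.Icc 0 T) := by
    intro T hT
    refine ODE_solution_unique (v := fun _ w => M.mulVec w) (fun _ => hlip)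
      (fun s hs => ((hDU s hs.1).continuousAt).continuousWithinAt)
      (fun s hs => (hDU s hs.1).hasDerivWithinAt)
      (fun s hs => ((hDX s hs.1).continuousAt).continuousWithinAt)
      (fun s hs => (hDX s hs.1).hasDerivWithinAt)
      hU0
  intro t ht i
  by_cases hi : i = Fin.last n
  · subst hi
    -- goal : z t (Fin.last n).castSucc = y t (Fin.last n)
    have hψcont : ContinuousOn (fun s => z s (LESO.idxn n) - y s (Fin.last n))
        (Set.Icc 0 t) := fun s hs =>
      (((hasDerivAt_pi.1 (hz s hs.1) (LESO.idxn n)).sub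
        (hasDerivAt_pi.1 (hy s hs.1) (Fin.last n))).continuousAt).continuousWithinAt
    have hψder : ∀ s ∈ Set.Ico 0 t, HasDerivWithinAt
        (fun s => z s (LESO.idxn n) - y s (Fin.last n)) 0 (Set.Ici s) s := by
      intro s hs
      have hUX : U s = Xc s := hEq t ht ⟨hs.1, hs.2.le⟩
      have harg2 : ((z s) ∘ (LESO.cc n)) = fun j : Fin n => y s j.castSucc := by
        funext j
        have h1 : LESO.cc n j = LESO.emb n j.castSucc :=
          (LESO.emb_castSucc j.castSucc (hcs j)).symm
        calc z s (LESO.cc n j) = U s j.castSucc := by rw [hUdef]; show _ = z s (LESO.emb n _); rw [h1]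
          _ = φinv (y s) j.castSucc := by rw [hUX]
          _ = y s j.castSucc := hinv_ne _ _ (hcs j)
      have hee : LESO.ee n (z s) = φinv (y s) := hUX
      have hFeq : MvPolynomial.eval (z s) (LESO.Pdef n M g (LESO.idxn n))
          = h (y s) (Fin.last n) := by
        have hsum2 : (∑ k : Fin n, MvPolynomial.eval (z s)
              (rename (LESO.cc n) (pderiv k g) * LESO.Lin n M k.castSucc))
            = ∑ k : Fin n, MvPolynomial.eval (fun j : Fin n => y s j.castSucc) (pderiv k g) *
              M.mulVec (φinv (y s)) k.castSucc := by
          refine Finset.sum_congr rfl fun k _ => ?_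
          rw [_root_.map_mul, eval_rename, LESO.eval_Lin, harg2, hee]
        unfold LESO.Pdef
        rw [if_pos rfl, _root_.map_add, map_sum, LESO.dd_idxn, LESO.eval_Lin, hsum2, hee,
          hform, if_pos rfl]
      have hzs := hasDerivAt_pi.1 (hz s hs.1) (LESO.idxn n)
      have hys := hasDerivAt_pi.1 (hy s hs.1) (Fin.last n)
      have hd := hzs.sub hys
      rw [show MvPolynomial.eval (z s) (LESO.Pdef n M g (LESO.idxn n)) -
          h (y s) (Fin.last n) = 0 by rw [hFeq]; ring] at hd
      exact hd.hasDerivWithinAt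
    have hconst := constant_of_has_deriv_right_zero hψcont hψder t ⟨ht, le_refl t⟩
    have hψ0 : z 0 (LESO.idxn n) - y 0 (Fin.last n) = 0 := by
      rw [hz0, hy0, show LESO.idxn n = (Fin.last n).castSucc from rfl, Fin.snoc_castSucc]
      ring
    rw [hψ0] at hconst
    have : z t (LESO.idxn n) = y t (Fin.last n) := by linarith [hconst]
    exact this
  · have h1 : (i.castSucc : Fin (n+2)) = LESO.emb n i := (LESO.emb_castSucc i hi).symm
    rw [h1]
    have h2 : z t (LESO.emb n i) = U t i := rfl
    rw [h2, hEq t ht ⟨ht, le_refl t⟩]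
    exact hinv_ne (y t) i hi
end

section
/- Let M = (a_{ij}) ∈ ℝ^{n×n} satisfy a_{in} = 0 for all i ≠ n, let g be a real polynomial in n−1 variables, let φ(x) = (x₁, …, x_{n−1}, xₙ + g(x₁, …, x_{n−1})) be the corresponding elementary transformation of ℝⁿ, and let h : ℝⁿ → ℝⁿ be the vector field obtained from the linear system ẋ = Mx by the change of variables y = φ(x), i.e., h(y) = Dφ(φ⁻¹(y)) · M · φ⁻¹(y). Then h satisfies the WDG condition. -/
open Matrix MvPolynomial

section aux

variable {n : ℕ}

/-- evaluation of an `MvPolynomial` is smooth -/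
lemma eval_contDiff (g : MvPolynomial (Fin n) ℝ) :
    ContDiff ℝ ⊤ (fun z : Fin n → ℝ => eval z g) :=
  (AnalyticOnNhd.eval_mvPolynomial g).contDiff

lemma pd_clm {n : ℕ} (e : (Fin n → ℝ) →L[ℝ] ℝ) (j : Fin n) (x : Fin n → ℝ) :
    pd (⇑e) j x = e (Pi.single j 1) := by
  unfold pd; rw [e.fderiv]

end aux


/-- If the matrix `M ∈ ℝ^{(n+1)×(n+1)}` has `M i (last) = 0` for all `i ≠ last`, then the
vector field `h(y) = Dφ(φ⁻¹(y))·M·φ⁻¹(y)` obtained from `ẋ = Mx` by the elementary change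
of variables `φ(x) = (x₁, …, xₙ, x_{n+1} + g(x₁, …, xₙ))` satisfies the WDG condition. -/
theorem wdg_of_linear_elementary {n : ℕ}
    (M : Matrix (Fin (n + 1)) (Fin (n + 1)) ℝ)
    (hM : ∀ i : Fin (n + 1), i ≠ Fin.last n → M i (Fin.last n) = 0)
    (g : MvPolynomial (Fin n) ℝ)
    (φ φinv : (Fin (n + 1) → ℝ) → (Fin (n + 1) → ℝ))
    (hφ : ∀ x, φ x = Function.update x (Fin.last n)
      (x (Fin.last n) + MvPolynomial.eval (fun i => x i.castSucc) g))
    (hφinv : ∀ y, φinv y = Function.update y (Fin.last n)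
      (y (Fin.last n) - MvPolynomial.eval (fun i => y i.castSucc) g))
    (h : (Fin (n + 1) → ℝ) → (Fin (n + 1) → ℝ))
    (hh : ∀ y, h y = fderiv ℝ φ (φinv y) (M.mulVec (φinv y))) :
    SatisfiesWDG h := by
  classical
  set lst := Fin.last n with hlst
  -- basic objects
  set P : (Fin n → ℝ) → ℝ := fun z => eval z g with hPdef
  have hP : ContDiff ℝ ⊤ P := eval_contDiff g
  have hPd : Differentiable ℝ P := hP.differentiable (by simp)
  have hP' : Differentiable ℝ (fderiv ℝ P) :=
    (hP.fderiv_right (m := 1) le_top).differentiable one_ne_zero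
  set L : (Fin (n + 1) → ℝ) →L[ℝ] (Fin n → ℝ) :=
    ContinuousLinearMap.pi (fun i => ContinuousLinearMap.proj i.castSucc) with hLdef
  have hLapp : ∀ (y : Fin (n + 1) → ℝ) (k : Fin n), L y k = y k.castSucc := by
    intro y k; simp [hLdef]
  set s : Fin (n + 1) → ℝ := Pi.single lst 1 with hsdef
  set M' : Matrix (Fin n) (Fin n) ℝ := fun k j => M k.castSucc j.castSucc with hM'def
  set LM : (Fin n → ℝ) →L[ℝ] (Fin n → ℝ) :=
    LinearMap.toContinuousLinearMap M'.mulVecLin with hLMdef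
  have hLMapp : ∀ z : Fin n → ℝ, LM z = M'.mulVec z := by
    intro z; simp [hLMdef]
  set K : (Fin n → ℝ) → ℝ := fun z => fderiv ℝ P z (LM z) - M lst lst * P z with hKdef
  have hK : Differentiable ℝ K :=
    (hP'.clm_apply LM.differentiable).sub ((differentiable_const _).mul hPd)
  set mulVecCLM : (Fin (n + 1) → ℝ) →L[ℝ] (Fin (n + 1) → ℝ) :=
    LinearMap.toContinuousLinearMap M.mulVecLin with hmvdef
  have hmvapp : ∀ y, mulVecCLM y = M.mulVec y := by
    intro y; simp [hmvdef]
  -- φ rewritten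
  have hφ' : φ = fun x => x + (P (L x)) • s := by
    funext x i
    rw [hφ]
    rcases eq_or_ne i lst with rfl | hi
    · simp only [hsdef, hPdef, Function.update_self, Pi.add_apply, Pi.smul_apply,
        Pi.single_eq_same, smul_eq_mul, mul_one]
      rw [show (L x) = fun i => x i.castSucc from funext fun k => hLapp x k]
    · simp [hsdef, Function.update_of_ne hi, Pi.single_eq_of_ne hi]
  -- derivative of φ
  have hDφ : ∀ x, HasFDerivAt φ
      (ContinuousLinearMap.id ℝ _ +
        (((fderiv ℝ P (L x)).comp L).smulRight s)) x := by
    intro x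
    rw [hφ']
    have hE : HasFDerivAt (fun y => P (L y)) ((fderiv ℝ P (L x)).comp L) x :=
      ((hPd (L x)).hasFDerivAt).comp x L.hasFDerivAt
    exact (hasFDerivAt_id x).add (hE.smul_const s)
  -- explicit formula for h
  have hH : ∀ y, h y = M.mulVec y + (K (L y)) • s := by
    intro y
    set x := φinv y with hx
    have hxeq : x = y + (-(P (L y))) • s := by
      funext i
      rw [hx, hφinv]
      rcases eq_or_ne i lst with rfl | hi
      · simp only [hsdef, hPdef, Function.update_self, Pi.add_apply, Pi.smul_apply,
          Pi.single_eq_same, smul_eq_mul, mul_one]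
        rw [show (L y) = fun i => y i.castSucc from funext fun k => hLapp y k]
        ring
      · simp [hsdef, Function.update_of_ne hi, Pi.single_eq_of_ne hi]
    have hLx : L x = L y := by
      funext k
      rw [hLapp, hLapp, hxeq]
      have : (k.castSucc : Fin (n + 1)) ≠ lst := (Fin.castSucc_lt_last k).ne
      simp [hsdef, Pi.single_eq_of_ne this]
    have hmulx : M.mulVec x = M.mulVec y + (-(M lst lst * P (L y))) • s := by
      rw [hxeq, Matrix.mulVec_add, Matrix.mulVec_smul, hsdef, Matrix.mulVec_single]
      congr 1
      funext i
      rcases eq_or_ne i lst with rfl | hi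
      · simp [Pi.single_eq_same]; ring
      · simp [Pi.single_eq_of_ne hi, hM i hi]
    have hLmulx : L (M.mulVec x) = LM (L y) := by
      funext k
      have hkne : (k.castSucc : Fin (n + 1)) ≠ lst := (Fin.castSucc_lt_last k).ne
      rw [hLapp, hmulx]
      simp only [Pi.add_apply, Pi.smul_apply, hsdef, Pi.single_eq_of_ne hkne,
        smul_eq_mul, mul_zero, add_zero]
      rw [hLMapp]
      rw [Matrix.mulVec, dotProduct, Fin.sum_univ_castSucc, hM k.castSucc hkne]
      simp only [zero_mul, add_zero]
      rw [Matrix.mulVec, dotProduct]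
      refine Finset.sum_congr rfl fun j _ => ?_
      rw [hM'def, hLapp]
    rw [hh y, (hDφ x).fderiv, ← hx]
    simp only [ContinuousLinearMap.add_apply, ContinuousLinearMap.id_apply,
      ContinuousLinearMap.smulRight_apply, ContinuousLinearMap.comp_apply]
    rw [hLx, hLmulx, hmulx, hKdef]
    simp only [sub_eq_add_neg, add_smul, neg_smul]
    abel
  -- row continuous linear maps
  set row : Fin (n + 1) → ((Fin (n + 1) → ℝ) →L[ℝ] ℝ) :=
    fun i => (ContinuousLinearMap.proj i).comp mulVecCLM with hrowdef
  have hrowapp : ∀ i y, row i y = M.mulVec y i := by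
    intro i y; simp [hrowdef, hmvapp]
  have hrow_single : ∀ i j, row i (Pi.single j 1) = M i j := by
    intro i j
    rw [hrowapp, Matrix.mulVec_single]; simp
  -- Fact 1 : off-last rows have constant partials
  have fact1 : ∀ i, i ≠ lst → ∀ j y, pd (fun y' => h y' i) j y = M i j := by
    intro i hi j y
    have : (fun y' => h y' i) = ⇑(row i) := by
      funext y'
      rw [hH y', hrowapp]
      simp [hsdef, Pi.single_eq_of_ne hi]
    rw [this, pd_clm, hrow_single]
  -- Fact 2 : the (last,last) partial is constant
  have fact2 : ∀ y, pd (fun y' => h y' lst) lst y = M lst lst := by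
    intro y
    have heq : (fun y' => h y' lst) = fun y' => row lst y' + K (L y') := by
      funext y'
      rw [hH y', hrowapp]
      simp [hsdef, Pi.single_eq_same]
    have hd : HasFDerivAt (fun y' => row lst y' + K (L y'))
        (row lst + (fderiv ℝ K (L y)).comp L) y :=
      ((row lst).hasFDerivAt).add (((hK (L y)).hasFDerivAt).comp y L.hasFDerivAt)
    have hL0 : L (Pi.single lst (1:ℝ)) = 0 := by
      funext k
      have : (k.castSucc : Fin (n + 1)) ≠ lst := (Fin.castSucc_lt_last k).ne
      rw [hLapp]; simp [Pi.single_eq_of_ne this]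
    unfold pd
    rw [heq, hd.fderiv]
    simp only [ContinuousLinearMap.add_apply, ContinuousLinearMap.comp_apply, hL0,
      map_zero, add_zero]
    exact hrow_single lst lst
  -- combinatorial part
  intro m hm c hc hnz
  -- each edge weight is a constant function
  have key : ∀ ℓ < m, ∃ r : ℝ, ∀ y, pd (fun y' => h y' (c (ℓ + 1))) (c ℓ) y = r := by
    -- propagation : if some vertex is last then all are last
    by_cases hex : ∃ ℓ ≤ m, c ℓ = lst
    · obtain ⟨ℓ₀, hℓ₀m, hℓ₀⟩ := hex
      have step : ∀ ℓ < m, c ℓ = lst → c (ℓ + 1) = lst := by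
        intro ℓ hℓ hcl
        by_contra hne
        apply hnz ℓ hℓ
        funext y
        have h0 : M (c (ℓ + 1)) (c ℓ) = 0 := by rw [hcl]; exact hM _ hne
        rw [fact1 (c (ℓ + 1)) hne (c ℓ) y, h0]
        rfl
      have upto : ∀ ℓ, ℓ₀ ≤ ℓ → ℓ ≤ m → c ℓ = lst := by
        intro ℓ hge hle
        induction ℓ with
        | zero => simpa [Nat.le_zero.mp hge] using hℓ₀
        | succ k ih =>
          rcases Nat.lt_or_ge ℓ₀ (k+1) with hlt | hge'
          · exact step k (lt_of_lt_of_le (Nat.lt_succ_self k) hle)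
              (ih (Nat.lt_succ_iff.mp hlt) (le_trans (Nat.le_succ k) hle))
          · rw [Nat.le_antisymm hge hge'] at hℓ₀; exact hℓ₀
      have hc0 : c 0 = lst := by rw [← hc]; exact upto m hℓ₀m le_rfl
      have alllast : ∀ ℓ ≤ m, c ℓ = lst := by
        intro ℓ hle
        induction ℓ with
        | zero => exact hc0
        | succ k ih =>
          exact step k hle (ih (le_trans (Nat.le_succ k) hle))
      intro ℓ hℓ
      refine ⟨M lst lst, fun y => ?_⟩
      have h1 : c (ℓ + 1) = lst := alllast (ℓ + 1) hℓ
      have h2 : c ℓ = lst := alllast ℓ (le_of_lt hℓ)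
      simp only [h1, h2]; exact fact2 y
    · push_neg at hex
      intro ℓ hℓ
      have hne : c (ℓ + 1) ≠ lst := hex (ℓ + 1) hℓ
      exact ⟨M (c (ℓ + 1)) (c ℓ), fun y => fact1 _ hne _ y⟩
  choose r hr using key
  refine ⟨∏ ℓ ∈ Finset.attach (Finset.range m), r ℓ.1 (Finset.mem_range.mp ℓ.2), fun y => ?_⟩
  rw [← Finset.prod_attach (Finset.range m)]
  exact Finset.prod_congr rfl fun ℓ _ => hr ℓ.1 (Finset.mem_range.mp ℓ.2) y
end

section
/- Let f : ℝ² → ℝ² be the smooth vector field f(z₁, z₂) = (√(1 + z₁²) · arsinh(z₂), √(1 + z₂²) · arsinh(z₁)), where arsinh denotes the inverse hyperbolic sine. Then the real vector space spanned by the iterated Lie derivatives {f, L_f f, L_f² f, L_f³ f, …} inside the space of smooth maps ℝ² → ℝ² is infinite-dimensional. -/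
open Matrix MvPolynomial

/-- The Lie derivative of a vector field `g` along a vector field `f`:
`(L_f g)_i = Σ_j (∂g_i/∂x_j) f_j`. -/
noncomputable def LieD {n : ℕ} (f g : (Fin n → ℝ) → (Fin n → ℝ)) :
    (Fin n → ℝ) → (Fin n → ℝ) :=
  fun x i => fderiv ℝ (fun x' => g x' i) x (f x)

/-- The vector field `f(z₁, z₂) = (√(1+z₁²)·arsinh z₂, √(1+z₂²)·arsinh z₁)`. -/
noncomputable def fEx : (Fin 2 → ℝ) → (Fin 2 → ℝ) := fun z =>
  ![Real.sqrt (1 + z 0 ^ 2) * Real.arsinh (z 1),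
    Real.sqrt (1 + z 1 ^ 2) * Real.arsinh (z 0)]


/-- The diagonal curve `t ↦ (sinh t, sinh t)`. -/
noncomputable def γdiag (t : ℝ) : Fin 2 → ℝ := fun _ => Real.sinh t

lemma sqrt_one_add_sinh_sq (t : ℝ) : Real.sqrt (1 + Real.sinh t ^ 2) = Real.cosh t := by
  rw [show (1 : ℝ) + Real.sinh t ^ 2 = Real.cosh t ^ 2 by rw [Real.cosh_sq]; ring]
  exact Real.sqrt_sq (Real.cosh_pos t).le

lemma fEx_gamma (t : ℝ) : fEx (γdiag t) = fun _ => Real.cosh t * t := by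
  funext i
  fin_cases i <;>
    simp [fEx, γdiag, sqrt_one_add_sinh_sq, Real.arsinh_sinh]

lemma contDiff_fEx : ContDiff ℝ (⊤ : ℕ∞) fEx := by
  rw [contDiff_pi]
  have hs : ∀ j : Fin 2, ContDiff ℝ (⊤ : ℕ∞) (fun z : Fin 2 → ℝ => Real.sqrt (1 + z j ^ 2)) := by
    intro j
    apply ContDiff.sqrt
    · exact contDiff_const.add ((contDiff_apply ℝ ℝ j).pow 2)
    · intro z; positivity
  have ha : ∀ j : Fin 2, ContDiff ℝ (⊤ : ℕ∞) (fun z : Fin 2 → ℝ => Real.arsinh (z j)) := fun j => by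
    exact Real.contDiff_arsinh.comp (contDiff_apply ℝ ℝ j)
  intro i
  fin_cases i
  · simpa [fEx] using (hs 0).mul (ha 1)
  · simpa [fEx] using (hs 1).mul (ha 0)

lemma contDiff_lieD {f g : (Fin 2 → ℝ) → (Fin 2 → ℝ)} (hf : ContDiff ℝ (⊤ : ℕ∞) f)
    (hg : ContDiff ℝ (⊤ : ℕ∞) g) : ContDiff ℝ (⊤ : ℕ∞) (LieD f g) := by
  rw [contDiff_pi]
  intro i
  have hgi : ContDiff ℝ (⊤ : ℕ∞) (fun x => g x i) := contDiff_pi.1 hg i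
  exact (hgi.fderiv_right (m := (⊤ : ℕ∞)) (by simp)).clm_apply hf

lemma lieD_gamma {g : (Fin 2 → ℝ) → (Fin 2 → ℝ)} (hg : ContDiff ℝ (⊤ : ℕ∞) g) (t : ℝ) (i : Fin 2) :
    LieD fEx g (γdiag t) i = t * deriv (fun s => g (γdiag s) i) t := by
  have hγ : HasDerivAt γdiag (fun _ => Real.cosh t) t :=
    hasDerivAt_pi.2 fun _ => Real.hasDerivAt_sinh t
  have hgi : DifferentiableAt ℝ (fun x => g x i) (γdiag t) :=
    ((contDiff_pi.1 hg i).differentiable (by simp)).differentiableAt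
  have hc : HasDerivAt (fun s => g (γdiag s) i)
      (fderiv ℝ (fun x => g x i) (γdiag t) (fun _ => Real.cosh t)) t :=
    hgi.hasFDerivAt.comp_hasDerivAt t hγ
  rw [hc.deriv]
  show fderiv ℝ (fun x => g x i) (γdiag t) (fEx (γdiag t)) = _
  rw [fEx_gamma]
  have hsm : (fun _ : Fin 2 => Real.cosh t * t) = t • (fun _ : Fin 2 => Real.cosh t) := by
    funext j; simp [mul_comm]
  rw [hsm, (fderiv ℝ (fun x => g x i) (γdiag t)).map_smul, smul_eq_mul]


section PolyPart
open Polynomial Real Filter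

/-- The "e^t-part" polynomials: `Sp 0 = X`, `Sp (k+1) = X * (Sp k + Sp k')`. -/
noncomputable def Sp : ℕ → Polynomial ℝ
  | 0 => Polynomial.X
  | (k+1) => Polynomial.X * (Sp k + Polynomial.derivative (Sp k))

/-- The "e^{-t}-part" polynomials. -/
noncomputable def Sm : ℕ → Polynomial ℝ
  | 0 => Polynomial.X
  | (k+1) => Polynomial.X * (Polynomial.derivative (Sm k) - Sm k)

/-- The value of the k-th iterated Lie derivative on the diagonal. -/
noncomputable def pfun (k : ℕ) (t : ℝ) : ℝ :=
  (Sp k).eval t * Real.exp t / 2 + (Sm k).eval t * Real.exp (-t) / 2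

lemma Sp_monic_natDegree : ∀ k, (Sp k).Monic ∧ (Sp k).natDegree = k + 1 := by
  intro k
  induction k with
  | zero => exact ⟨monic_X, natDegree_X⟩
  | succ k ih =>
    obtain ⟨hm, hd⟩ := ih
    have hlt : (Polynomial.derivative (Sp k)).natDegree < (Sp k).natDegree := by
      rw [hd]; exact lt_of_lt_of_le (natDegree_derivative_lt (by rw [hd]; omega)) (by rw [hd])
    have hdeg : (Polynomial.derivative (Sp k)).degree < (Sp k).degree :=
      degree_lt_degree hlt
    have hm2 : (Sp k + Polynomial.derivative (Sp k)).Monic := hm.add_of_left hdeg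
    constructor
    · exact monic_X.mul hm2
    · rw [show Sp (k+1) = Polynomial.X * (Sp k + Polynomial.derivative (Sp k)) from rfl,
        monic_X.natDegree_mul hm2, natDegree_X,
        natDegree_add_eq_left_of_degree_lt hdeg, hd]
      omega

example : True := trivial

lemma Sp_sum_eq_zero : ∀ (s : Finset ℕ) (c : ℕ → ℝ),
    (∑ i ∈ s, c i • Sp i) = 0 → ∀ i ∈ s, c i = 0 := by
  intro s
  induction s using Finset.strongInduction with
  | _ s ih =>
    intro c h i hi
    have hs : s.Nonempty := ⟨i, hi⟩
    set N := s.max' hs with hN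
    have hcN : c N = 0 := by
      have hco := congrArg (fun P : Polynomial ℝ => P.coeff (N + 1)) h
      simp only [finset_sum_coeff, Polynomial.coeff_smul, Polynomial.coeff_zero, smul_eq_mul] at hco
      rw [Finset.sum_eq_single N] at hco
      · have hcoeff : (Sp N).coeff (N + 1) = 1 := by
          have h1 := (Sp_monic_natDegree N).1.coeff_natDegree
          rwa [(Sp_monic_natDegree N).2] at h1
        rwa [hcoeff, mul_one] at hco
      · intro j hj hjne
        have : j < N := lt_of_le_of_ne (s.le_max' j hj) hjne
        rw [coeff_eq_zero_of_natDegree_lt (by rw [(Sp_monic_natDegree j).2]; omega), mul_zero]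
      · intro hNs; exact absurd (s.max'_mem hs) hNs
    rcases eq_or_ne i N with rfl | hiN
    · exact hcN
    · have herase : (∑ j ∈ s.erase N, c j • Sp j) = 0 := by
        rw [Finset.sum_erase_eq_sub (s.max'_mem hs), h, hcN, zero_smul, sub_zero]
      exact ih (s.erase N) (Finset.erase_ssubset (s.max'_mem hs)) c herase i
        (Finset.mem_erase.2 ⟨hiN, hi⟩)

lemma poly_eq_zero_of_tendsto_zero (P : Polynomial ℝ)
    (h : Tendsto (fun t => P.eval t) atTop (nhds 0)) : P = 0 := by
  by_contra hP
  rcases lt_or_ge 0 P.degree with hdeg | hdeg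
  · exact not_tendsto_nhds_of_tendsto_atTop (P.abs_tendsto_atTop hdeg) 0
      (by simpa using h.abs)
  · obtain ⟨c, rfl⟩ : ∃ c, P = Polynomial.C c := ⟨P.coeff 0, eq_C_of_degree_le_zero hdeg⟩
    have hc : Tendsto (fun _ : ℝ => c) atTop (nhds 0) := by simpa using h
    have : c = 0 := tendsto_nhds_unique tendsto_const_nhds hc
    exact hP (by rw [this, map_zero])

lemma P_eq_zero (P Q : Polynomial ℝ)
    (h : ∀ t, P.eval t * Real.exp t / 2 + Q.eval t * Real.exp (-t) / 2 = 0) : P = 0 := by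
  apply poly_eq_zero_of_tendsto_zero
  have h1 : ∀ t, P.eval t = -(Q.eval t / Real.exp t * Real.exp (-t)) := by
    intro t
    have ht := h t
    have he : Real.exp t ≠ 0 := (Real.exp_pos t).ne'
    rw [Real.exp_neg] at ht ⊢
    field_simp at ht ⊢
    linarith
  rw [funext h1]
  have h2 : Tendsto (fun t => Q.eval t / Real.exp t * Real.exp (-t)) atTop (nhds 0) := by
    simpa using (Q.tendsto_div_exp_atTop).mul Real.tendsto_exp_neg_atTop_nhds_zero
  simpa using h2.neg

lemma hasDerivAt_pfun (k : ℕ) (t : ℝ) :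
    HasDerivAt (pfun k)
      ((Sp k + Polynomial.derivative (Sp k)).eval t * Real.exp t / 2 +
        (Polynomial.derivative (Sm k) - Sm k).eval t * Real.exp (-t) / 2) t := by
  have h1 : HasDerivAt (fun t => (Sp k).eval t * Real.exp t / 2)
      ((Sp k + Polynomial.derivative (Sp k)).eval t * Real.exp t / 2) t := by
    have := (((Sp k).hasDerivAt t).mul (Real.hasDerivAt_exp t)).div_const 2
    refine this.congr_deriv ?_
    simp [Polynomial.eval_add]; ring
  have h2 : HasDerivAt (fun t => (Sm k).eval t * Real.exp (-t) / 2)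
      ((Polynomial.derivative (Sm k) - Sm k).eval t * Real.exp (-t) / 2) t := by
    have hexp : HasDerivAt (fun t : ℝ => Real.exp (-t)) (-Real.exp (-t)) t := by
      simpa [Function.comp_def] using (Real.hasDerivAt_exp (-t)).comp t (hasDerivAt_neg t)
    have := (((Sm k).hasDerivAt t).mul hexp).div_const 2
    refine this.congr_deriv ?_
    simp [Polynomial.eval_sub]; ring
  exact h1.add h2

lemma pfun_succ (k : ℕ) (t : ℝ) : pfun (k + 1) t = t * deriv (pfun k) t := by
  rw [(hasDerivAt_pfun k t).deriv]
  show (Sp (k+1)).eval t * Real.exp t / 2 + (Sm (k+1)).eval t * Real.exp (-t) / 2 = _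
  rw [show Sp (k+1) = Polynomial.X * (Sp k + Polynomial.derivative (Sp k)) from rfl,
    show Sm (k+1) = Polynomial.X * (Polynomial.derivative (Sm k) - Sm k) from rfl]
  simp [Polynomial.eval_mul]; ring

lemma pfun_zero (t : ℝ) : pfun 0 t = Real.cosh t * t := by
  show Polynomial.X.eval t * Real.exp t / 2 + Polynomial.X.eval t * Real.exp (-t) / 2 = _
  rw [Real.cosh_eq]; simp; ring

lemma pfun_linearIndependent : LinearIndependent ℝ pfun := by
  rw [linearIndependent_iff']
  intro s c h i hi
  have hP : (∑ j ∈ s, c j • Sp j) = 0 := by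
    apply P_eq_zero _ (∑ j ∈ s, c j • Sm j)
    intro t
    have ht := congrFun h t
    simp only [Finset.sum_apply, Pi.smul_apply, smul_eq_mul, Pi.zero_apply] at ht
    have : (∑ j ∈ s, c j • Sp j).eval t * Real.exp t / 2 +
        (∑ j ∈ s, c j • Sm j).eval t * Real.exp (-t) / 2
        = ∑ j ∈ s, c j * pfun j t := by
      simp only [Polynomial.eval_finset_sum, eval_smul, smul_eq_mul, Finset.sum_mul, Finset.sum_div,
        ← Finset.sum_add_distrib, pfun]
      refine Finset.sum_congr rfl fun j _ => by ring
    rw [this, ht]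
  exact Sp_sum_eq_zero s c hP i hi

end PolyPart

lemma key_iterate (k : ℕ) : ContDiff ℝ (⊤ : ℕ∞) ((LieD fEx)^[k] fEx) ∧
    ∀ (t : ℝ) (i : Fin 2), (LieD fEx)^[k] fEx (γdiag t) i = pfun k t := by
  induction k with
  | zero =>
    refine ⟨contDiff_fEx, fun t i => ?_⟩
    simp only [Function.iterate_zero, id_eq]
    rw [fEx_gamma, pfun_zero]
  | succ k ih =>
    have hsucc : (LieD fEx)^[k+1] fEx = LieD fEx ((LieD fEx)^[k] fEx) :=
      Function.iterate_succ_apply' (LieD fEx) k fEx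
    refine ⟨?_, ?_⟩
    · rw [hsucc]; exact contDiff_lieD contDiff_fEx ih.1
    · intro t i
      rw [hsucc, lieD_gamma ih.1, pfun_succ]
      congr 2
      funext s
      exact ih.2 s i

/-- For the vector field `f(z₁, z₂) = (√(1+z₁²)·arsinh z₂, √(1+z₂²)·arsinh z₁)`, the span
of the iterated Lie derivatives `{f, L_f f, L_f² f, …}` is infinite-dimensional. -/
theorem span_lieD_fEx_infiniteDimensional :
    ¬ FiniteDimensional ℝ
        (Submodule.span ℝ (Set.range fun k : ℕ => (LieD fEx)^[k] fEx)) := by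
  intro hfin
  let Φ : ((Fin 2 → ℝ) → (Fin 2 → ℝ)) →ₗ[ℝ] (ℝ → ℝ) :=
    { toFun := fun h t => h (γdiag t) 0
      map_add' := fun a b => rfl
      map_smul' := fun c a => rfl }
  set V := Submodule.span ℝ (Set.range fun k : ℕ => (LieD fEx)^[k] fEx) with hV
  let w : ℕ → V := fun k => ⟨(LieD fEx)^[k] fEx, Submodule.subset_span ⟨k, rfl⟩⟩
  have hw : LinearIndependent ℝ w := by
    apply LinearIndependent.of_comp (Φ.comp V.subtype)
    have hcomp : (Φ.comp V.subtype) ∘ w = pfun := by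
      funext k
      exact funext fun t => (key_iterate k).2 t 0
    rw [hcomp]
    exact pfun_linearIndependent
  have h1 : (Cardinal.mk ℕ) ≤ Module.rank ℝ V := hw.cardinal_le_rank
  have h2 : Module.rank ℝ V < Cardinal.aleph0 := Module.rank_lt_aleph0 ℝ V
  rw [Cardinal.mk_nat] at h1
  exact absurd h1 (not_le.2 h2)
end

section
/- Let f : ℝ² → ℝ² be the smooth vector field f(z₁, z₂) = (√(1 + z₁²) · arsinh(z₂), √(1 + z₂²) · arsinh(z₁)). Then for every k ∈ ℕ, the iterated Lie derivative L_f^{k+1} f does not belong to the real vector space spanned by {f, L_f f, …, L_f^k f} inside the space of smooth maps ℝ² → ℝ². -/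
open Matrix MvPolynomial

namespace LieAux

/-- transformed vector fields in `w = arsinh z` coordinates -/
noncomputable def G : ℕ → ((Fin 2 → ℝ) → (Fin 2 → ℝ))
  | 0 => fun w => ![Real.cosh (w 0) * w 1, Real.cosh (w 1) * w 0]
  | (k+1) => fun w => fderiv ℝ (G k) w ![w 1, w 0]

theorem contDiff_swap : ContDiff ℝ (⊤ : WithTop ℕ∞) (fun w : Fin 2 → ℝ => ![w 1, w 0]) := by
  rw [contDiff_pi]
  intro i
  fin_cases i <;> simp <;> exact contDiff_apply ℝ ℝ _

theorem G_smooth (k : ℕ) : ContDiff ℝ (⊤ : WithTop ℕ∞) (G k) := by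
  induction k with
  | zero =>
    rw [contDiff_pi]
    intro i
    fin_cases i <;> simp [G]
    · exact (Real.contDiff_cosh.comp (contDiff_apply ℝ ℝ 0)).mul (contDiff_apply ℝ ℝ 1)
    · exact (Real.contDiff_cosh.comp (contDiff_apply ℝ ℝ 1)).mul (contDiff_apply ℝ ℝ 0)
  | succ k ih =>
    show ContDiff ℝ (⊤ : WithTop ℕ∞) fun w => fderiv ℝ (G k) w ![w 1, w 0]
    exact (ih.fderiv_right le_top).clm_apply contDiff_swap

end LieAux

namespace LieAux2
open Real LieAux ContinuousLinearMap

noncomputable def phi : (Fin 2 → ℝ) → (Fin 2 → ℝ) := fun z => ![arsinh (z 0), arsinh (z 1)]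

noncomputable def Dphi (z : Fin 2 → ℝ) : (Fin 2 → ℝ) →L[ℝ] (Fin 2 → ℝ) :=
  ContinuousLinearMap.pi ![(√(1 + z 0 ^ 2))⁻¹ • ContinuousLinearMap.proj 0,
                           (√(1 + z 1 ^ 2))⁻¹ • ContinuousLinearMap.proj 1]

theorem hasFDerivAt_phi (z : Fin 2 → ℝ) : HasFDerivAt phi (Dphi z) z := by
  rw [hasFDerivAt_pi']
  intro i
  fin_cases i
  · have := (hasFDerivAt_apply (𝕜 := ℝ) 0 z).arsinh
    simpa [phi, Dphi] using this
  · have := (hasFDerivAt_apply (𝕜 := ℝ) 1 z).arsinh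
    simpa [phi, Dphi] using this

theorem Dphi_fEx (x : Fin 2 → ℝ) : Dphi x (fEx x) = ![phi x 1, phi x 0] := by
  funext i
  have h0 : (√(1 + x 0 ^ 2)) ≠ 0 := ne_of_gt (Real.sqrt_pos.mpr (by positivity))
  have h1 : (√(1 + x 1 ^ 2)) ≠ 0 := ne_of_gt (Real.sqrt_pos.mpr (by positivity))
  fin_cases i
  · simp [Dphi, fEx, phi, ContinuousLinearMap.pi_apply]
    field_simp
  · simp [Dphi, fEx, phi, ContinuousLinearMap.pi_apply]
    field_simp

theorem key (k : ℕ) : (LieD fEx)^[k] fEx = fun z => G k (phi z) := by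
  induction k with
  | zero =>
    funext z
    funext i
    fin_cases i <;>
      simp [fEx, G, phi, Real.cosh_arsinh]
  | succ k ih =>
    rw [Function.iterate_succ_apply', ih]
    funext x i
    have DG : HasFDerivAt (G k) (fderiv ℝ (G k) (phi x)) (phi x) :=
      (((G_smooth k).differentiable (by simp)) (phi x)).hasFDerivAt
    have h1 : HasFDerivAt (fun w => G k w i)
        ((proj i).comp (fderiv ℝ (G k) (phi x))) (phi x) := hasFDerivAt_pi'.1 DG i
    have H : HasFDerivAt (fun z => G k (phi z) i)
        (((proj i).comp (fderiv ℝ (G k) (phi x))).comp (Dphi x)) x :=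
      h1.comp x (hasFDerivAt_phi x)
    show LieD fEx (fun z => G k (phi z)) x i = G (k+1) (phi x) i
    rw [LieD, H.fderiv]
    simp only [ContinuousLinearMap.comp_apply, Dphi_fEx, proj_apply]
    rfl

noncomputable def v (k : ℕ) (t : ℝ) : ℝ := G k ![t, t] 0

theorem diagCurve (t : ℝ) : (![t, t] : Fin 2 → ℝ) = t • ![1, 1] := by
  funext i; fin_cases i <;> simp

theorem hasDerivAt_v (k : ℕ) (t : ℝ) :
    HasDerivAt (v k) (fderiv ℝ (G k) ![t, t] ![1, 1] 0) t := by
  have hc : HasDerivAt (fun s : ℝ => (![s, s] : Fin 2 → ℝ)) ![1, 1] t := by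
    have := (hasDerivAt_id t).smul_const (![1, 1] : Fin 2 → ℝ)
    simp only [one_smul] at this
    refine this.congr_of_eventuallyEq (Filter.Eventually.of_forall fun s => ?_)
    exact diagCurve s
  have DG : HasFDerivAt (G k) (fderiv ℝ (G k) ![t, t]) ![t, t] :=
    (((G_smooth k).differentiable (by simp)) _).hasFDerivAt
  have h1 : HasFDerivAt (fun w => G k w 0)
      ((proj 0).comp (fderiv ℝ (G k) ![t, t])) ![t, t] := hasFDerivAt_pi'.1 DG 0
  exact h1.comp_hasDerivAt t hc

theorem v_succ (k : ℕ) (t : ℝ) : v (k + 1) t = t * deriv (v k) t := by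
  rw [(hasDerivAt_v k t).deriv]
  show fderiv ℝ (G k) ![t, t] ![(![t,t] : Fin 2 → ℝ) 1, (![t,t] : Fin 2 → ℝ) 0] 0 = _
  have : (![(![t,t] : Fin 2 → ℝ) 1, (![t,t] : Fin 2 → ℝ) 0] : Fin 2 → ℝ) = t • ![1, 1] := by
    funext i; fin_cases i <;> simp
  rw [this, _root_.map_smul]
  simp

open Polynomial in
noncomputable def PQ : ℕ → Polynomial ℝ × Polynomial ℝ
  | 0 => (Polynomial.X, 0)
  | (k+1) => (Polynomial.X * (Polynomial.derivative (PQ k).1 + (PQ k).2), Polynomial.X * (Polynomial.derivative (PQ k).2 + (PQ k).1))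

theorem v_eq (k : ℕ) (t : ℝ) :
    v k t = (PQ k).1.eval t * Real.cosh t + (PQ k).2.eval t * Real.sinh t := by
  induction k generalizing t with
  | zero => simp [v, G, PQ]; ring
  | succ k ih =>
    have hv : v k = fun t => (PQ k).1.eval t * Real.cosh t + (PQ k).2.eval t * Real.sinh t :=
      funext ih
    have hd : HasDerivAt (fun t => (PQ k).1.eval t * Real.cosh t + (PQ k).2.eval t * Real.sinh t)
        (((PQ k).1.derivative.eval t * Real.cosh t + (PQ k).1.eval t * Real.sinh t) +
         ((PQ k).2.derivative.eval t * Real.sinh t + (PQ k).2.eval t * Real.cosh t)) t :=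
      (((PQ k).1.hasDerivAt t).mul (Real.hasDerivAt_cosh t)).add
        (((PQ k).2.hasDerivAt t).mul (Real.hasDerivAt_sinh t))
    rw [v_succ, hv, hd.deriv]
    show _ = ((PQ (k+1)).1.eval t) * _ + ((PQ (k+1)).2.eval t) * _
    simp only [PQ, Polynomial.eval_mul, Polynomial.eval_X, Polynomial.eval_add, Polynomial.eval_X]
    ring

end LieAux2

namespace LieAux3
open LieAux LieAux2 Polynomial Filter Topology

noncomputable def S (k : ℕ) : Polynomial ℝ := (PQ k).1 + (PQ k).2

theorem S_succ (k : ℕ) : S (k + 1) = Polynomial.X * (derivative (S k) + S k) := by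
  simp only [S, PQ, derivative_add]
  ring

theorem S_monic_deg (k : ℕ) : (S k).Monic ∧ (S k).natDegree = k + 1 := by
  induction k with
  | zero =>
    constructor
    · show (Polynomial.X + (0 : Polynomial ℝ)).Monic
      simp only [add_zero]
      exact monic_X
    · show (Polynomial.X + (0 : Polynomial ℝ)).natDegree = 1
      simp
  | succ k ih =>
    obtain ⟨hm, hdeg⟩ := ih
    have hne : S k ≠ 0 := hm.ne_zero
    have hdlt : (derivative (S k)).degree < (S k).degree := degree_derivative_lt hne
    have hmon : (derivative (S k) + S k).Monic := hm.add_of_right hdlt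
    have hndlt : (derivative (S k)).natDegree < (S k).natDegree :=
      natDegree_derivative_lt (by omega)
    have hnd : (derivative (S k) + S k).natDegree = k + 1 := by
      rw [natDegree_eq_of_degree_eq (degree_add_eq_right_of_degree_lt hdlt), hdeg]
    refine ⟨?_, ?_⟩
    · rw [S_succ]; exact monic_X.mul hmon
    · rw [S_succ, natDegree_mul Polynomial.X_ne_zero hmon.ne_zero, natDegree_X, hnd]
      omega

noncomputable def D (k : ℕ) : Polynomial ℝ := (PQ k).1 - (PQ k).2

theorem degree_S (j : ℕ) : (S j).degree = ((j + 1 : ℕ) : WithBot ℕ) := by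
  rw [degree_eq_natDegree (S_monic_deg j).1.ne_zero, (S_monic_deg j).2]

theorem main (k : ℕ) :
    (LieD fEx)^[k + 1] fEx ∉
      Submodule.span ℝ (Set.range fun j : Fin (k + 1) => (LieD fEx)^[(j : ℕ)] fEx) := by
  intro hmem
  rw [Submodule.mem_span_range_iff_exists_fun] at hmem
  obtain ⟨c, hc⟩ := hmem
  -- pointwise diagonal identity
  have hv : ∀ t : ℝ, (∑ j : Fin (k + 1), c j * v (j : ℕ) t) = v (k + 1) t := by
    intro t
    have h1 := congrFun (congrFun hc ![Real.sinh t, Real.sinh t]) 0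
    have hphi : phi ![Real.sinh t, Real.sinh t] = ![t, t] := by
      funext i; fin_cases i <;> simp [phi, Real.arsinh_sinh]
    simp only [key, Finset.sum_apply, Pi.smul_apply, smul_eq_mul, hphi] at h1
    simpa only [v] using h1
  -- polynomial identity
  set A : Polynomial ℝ := S (k + 1) - ∑ j : Fin (k + 1), c j • S (j : ℕ) with hA_def
  set B : Polynomial ℝ := D (k + 1) - ∑ j : Fin (k + 1), c j • D (j : ℕ) with hB_def
  have hAB : ∀ t : ℝ, A.eval t * Real.exp t + B.eval t * Real.exp (-t) = 0 := by
    intro t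
    have h2 := hv t
    simp only [v_eq] at h2
    rw [Real.cosh_eq, Real.sinh_eq] at h2
    have hsum : ∀ (F : ℕ → Polynomial ℝ),
        Polynomial.eval t (∑ j : Fin (k + 1), c j • F (j : ℕ)) =
          ∑ j : Fin (k + 1), c j * Polynomial.eval t (F (j : ℕ)) := by
      intro F
      rw [Polynomial.eval_finset_sum]
      exact Finset.sum_congr rfl fun j _ => by rw [Polynomial.eval_smul, smul_eq_mul]
    have hexp : ∑ j : Fin (k + 1),
        c j * (Polynomial.eval t (PQ (j : ℕ)).1 * ((Real.exp t + Real.exp (-t)) / 2) +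
          Polynomial.eval t (PQ (j : ℕ)).2 * ((Real.exp t - Real.exp (-t)) / 2)) =
        (∑ j : Fin (k + 1), c j * Polynomial.eval t (PQ (j : ℕ)).1) *
            ((Real.exp t + Real.exp (-t)) / 2) +
          (∑ j : Fin (k + 1), c j * Polynomial.eval t (PQ (j : ℕ)).2) *
            ((Real.exp t - Real.exp (-t)) / 2) := by
      rw [Finset.sum_mul, Finset.sum_mul, ← Finset.sum_add_distrib]
      exact Finset.sum_congr rfl fun j _ => by ring
    rw [hexp] at h2
    have hsP : ∑ j : Fin (k + 1), c j * Polynomial.eval t (S (j : ℕ)) =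
        (∑ j : Fin (k + 1), c j * Polynomial.eval t (PQ (j : ℕ)).1) +
          ∑ j : Fin (k + 1), c j * Polynomial.eval t (PQ (j : ℕ)).2 := by
      rw [← Finset.sum_add_distrib]
      exact Finset.sum_congr rfl fun j _ => by simp only [S, Polynomial.eval_add]; ring
    have hsD : ∑ j : Fin (k + 1), c j * Polynomial.eval t (D (j : ℕ)) =
        (∑ j : Fin (k + 1), c j * Polynomial.eval t (PQ (j : ℕ)).1) -
          ∑ j : Fin (k + 1), c j * Polynomial.eval t (PQ (j : ℕ)).2 := by
      rw [← Finset.sum_sub_distrib]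
      exact Finset.sum_congr rfl fun j _ => by simp only [D, Polynomial.eval_sub]; ring
    rw [hA_def, hB_def]
    simp only [Polynomial.eval_sub, hsum S, hsum D, hsP, hsD]
    simp only [S, D, Polynomial.eval_add, Polynomial.eval_sub]
    linarith [h2]
  -- A is monic of degree k + 2
  have hAdeg : (∑ j : Fin (k + 1), c j • S (j : ℕ)).degree < ((k + 2 : ℕ) : WithBot ℕ) := by
    refine lt_of_le_of_lt (Polynomial.degree_sum_le _ _) ?_
    rw [Finset.sup_lt_iff (bot_lt_iff_ne_bot.mpr (by simp))]
    intro j _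
    refine lt_of_le_of_lt (Polynomial.degree_smul_le _ _) ?_
    rw [degree_S]
    exact_mod_cast (by omega : (j : ℕ) + 1 < k + 2)
  have hAmon : A.Monic := by
    rw [hA_def, sub_eq_add_neg]
    refine (S_monic_deg (k + 1)).1.add_of_left ?_
    rw [Polynomial.degree_neg, degree_S]
    exact hAdeg
  have hAd : A.degree = ((k + 2 : ℕ) : WithBot ℕ) := by
    rw [hA_def, sub_eq_add_neg,
      Polynomial.degree_add_eq_left_of_degree_lt (by rw [Polynomial.degree_neg, degree_S]; exact hAdeg),
      degree_S]
  have T1 : Tendsto (fun t => A.eval t) atTop atTop := by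
    refine Polynomial.tendsto_atTop_of_leadingCoeff_nonneg A ?_ ?_
    · rw [hAd]; exact_mod_cast Nat.succ_pos (k + 1)
    · rw [hAmon.leadingCoeff]; exact zero_le_one
  have h3 : ∀ t, A.eval t = -(B.eval t / Real.exp t * Real.exp (-t)) := by
    intro t
    have h := hAB t
    have he : (0 : ℝ) < Real.exp t := Real.exp_pos t
    rw [Real.exp_neg] at h ⊢
    field_simp at h ⊢
    nlinarith [h]
  have T2 : Tendsto (fun t => A.eval t) atTop (𝓝 0) := by
    have := ((B.tendsto_div_exp_atTop).mul Real.tendsto_exp_neg_atTop_nhds_zero).neg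
    simp only [zero_mul, neg_zero] at this
    exact Tendsto.congr (fun t => (h3 t).symm) this
  exact not_tendsto_nhds_of_tendsto_atTop T1 0 T2

end LieAux3

/-- For the vector field `f(z₁, z₂) = (√(1+z₁²)·arsinh z₂, √(1+z₂²)·arsinh z₁)` and every
`k`, the Lie derivative `L_f^{k+1} f` does not belong to the span of `{f, L_f f, …, L_f^k f}`. -/
theorem lieD_fEx_succ_not_mem_span (k : ℕ) :
    (LieD fEx)^[k + 1] fEx ∉
      Submodule.span ℝ (Set.range fun j : Fin (k + 1) => (LieD fEx)^[(j : ℕ)] fEx) :=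
  LieAux3.main k
end

section
/- The polynomial vector field h : ℝ² → ℝ² given by h(y₁, y₂) = (y₂ + y₁², −2y₁(y₂ + y₁²)) is super-linearizable, but it does not satisfy the WDG condition (in particular, ∂h₁/∂y₁ = 2y₁ is a nonconstant weight on a cycle of its weighted dependency graph). -/
open Matrix MvPolynomial

/-- The linearizing matrix. -/
def Amat : Matrix (Fin 5) (Fin 5) ℝ := Matrix.of fun i j =>
  if i = 0 ∧ j = 4 then 1 else if i = 1 ∧ j = 2 then -2 else if i = 2 ∧ j = 3 then 1 else 0

lemma Amat_mulVec (w : Fin 5 → ℝ) :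
    Amat.mulVec w = ![w 4, -2 * w 2, w 3, 0, 0] := by
  funext j
  fin_cases j <;>
    simp (config := { decide := true }) [Amat, Matrix.mulVec, dotProduct, Fin.sum_univ_five]

lemma Amat_cube : Amat ^ 3 = 0 := by
  ext i j
  fin_cases i <;> fin_cases j <;>
    simp (config := { decide := true }) [Amat, pow_succ, Matrix.mul_apply, Fin.sum_univ_five]

lemma exp_of_cube_zero (M : Matrix (Fin 5) (Fin 5) ℝ) (hM : M ^ 3 = 0) :
    NormedSpace.exp M = 1 + M + (2:ℝ)⁻¹ • M ^ 2 := by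
  simp only [NormedSpace.exp_eq_tsum (𝕂 := ℝ)]
  rw [tsum_eq_sum (s := Finset.range 3)]
  · simp [Finset.sum_range_succ, Nat.factorial]
  · intro n hn
    have h3 : 3 ≤ n := by simpa using hn
    have : M ^ n = 0 := by
      calc M ^ n = M ^ 3 * M ^ (n - 3) := by rw [← pow_add, Nat.add_sub_cancel' h3]
        _ = 0 := by rw [hM, zero_mul]
    simp [this]


/-- The vector field `h(y₁, y₂) = (y₂ + y₁², −2y₁(y₂ + y₁²))` is super-linearizable but does
not satisfy the WDG condition; in particular `∂h₁/∂y₁ = 2y₁` is a nonconstant weight on a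
cycle of its weighted dependency graph. -/
theorem counterexample_wdg (h : (Fin 2 → ℝ) → (Fin 2 → ℝ))
    (hh : ∀ y : Fin 2 → ℝ,
      h y = ![y 1 + y 0 ^ 2, -2 * y 0 * (y 1 + y 0 ^ 2)]) :
    IsSuperLinearizable h ∧ ¬ SatisfiesWDG h ∧
      ∀ y : Fin 2 → ℝ, pd (fun y' => h y' 0) 0 y = 2 * y 0 := by
  have h0 : ∀ y : Fin 2 → ℝ, h y 0 = y 1 + y 0 ^ 2 := fun y => by rw [hh]; simp
  have h1 : ∀ y : Fin 2 → ℝ, h y 1 = -2 * y 0 * (y 1 + y 0 ^ 2) := fun y => by rw [hh]; simp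
  -- the partial derivative claim
  have hpd : ∀ y : Fin 2 → ℝ, pd (fun y' => h y' 0) 0 y = 2 * y 0 := by
    intro y
    have hfun : (fun y' : Fin 2 → ℝ => h y' 0) = fun y' => y' 1 + y' 0 ^ 2 :=
      funext fun y' => h0 y'
    have hproj0 : HasFDerivAt (fun y' : Fin 2 → ℝ => y' 0)
        (ContinuousLinearMap.proj (R := ℝ) (φ := fun _ : Fin 2 => ℝ) 0) y := by
      have := (ContinuousLinearMap.proj (R := ℝ) (φ := fun _ : Fin 2 => ℝ)
        (0 : Fin 2)).hasFDerivAt (x := y)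
      exact this
    have hproj1 : HasFDerivAt (fun y' : Fin 2 → ℝ => y' 1)
        (ContinuousLinearMap.proj (R := ℝ) (φ := fun _ : Fin 2 => ℝ) 1) y := by
      have := (ContinuousLinearMap.proj (R := ℝ) (φ := fun _ : Fin 2 => ℝ)
        (1 : Fin 2)).hasFDerivAt (x := y)
      exact this
    have h2 := (hasDerivAt_pow 2 (y 0)).comp_hasFDerivAt y hproj0
    have hd : HasFDerivAt (fun y' : Fin 2 → ℝ => y' 1 + y' 0 ^ 2)
        (ContinuousLinearMap.proj 1 + ((2 : ℝ) * y 0 ^ (2 - 1)) •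
          ContinuousLinearMap.proj (R := ℝ) (φ := fun _ : Fin 2 => ℝ) 0) y := hproj1.add h2
    rw [pd, hfun, hd.fderiv]
    simp [Pi.single_eq_of_ne, Pi.single_eq_same]
  refine ⟨?_, ?_, hpd⟩
  · -- super-linearizable
    refine ⟨3, Amat, fun v => ![v 0 * (v 1 + v 0 ^ 2), (v 1 + v 0 ^ 2) ^ 2, v 1 + v 0 ^ 2],
      ⟨![X 0 * (X 1 + X 0 ^ 2), (X 1 + X 0 ^ 2) ^ 2, X 1 + X 0 ^ 2], ?_⟩, ?_⟩
    · intro v i; fin_cases i <;> simp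
    intro x₀ x hx0 hx t ht i
    set a := x₀ 0 with ha
    set b := x₀ 1 with hb
    set z := b + a ^ 2 with hz
    -- component derivatives
    have hx0d : ∀ s, 0 ≤ s → HasDerivAt (fun r => x r 0) (x s 1 + x s 0 ^ 2) s := by
      intro s hs
      have := (hasDerivAt_pi.1 (hx s hs)) 0
      rwa [h0] at this
    have hx1d : ∀ s, 0 ≤ s → HasDerivAt (fun r => x r 1) (-2 * x s 0 * (x s 1 + x s 0 ^ 2)) s := by
      intro s hs
      have := (hasDerivAt_pi.1 (hx s hs)) 1
      rwa [h1] at this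
    -- the conserved quantity
    have hud : ∀ s, 0 ≤ s → HasDerivAt (fun r => x r 1 + x r 0 ^ 2) 0 s := by
      intro s hs
      have := (hx1d s hs).add ((hx0d s hs).pow 2)
      convert this using 1
      · rfl
      · rfl
      · rfl
      push_cast
      ring
    have huc : ∀ s, 0 ≤ s → x s 1 + x s 0 ^ 2 = z := by
      intro s hs
      have := constant_of_has_deriv_right_zero (f := fun r => x r 1 + x r 0 ^ 2)
        (a := 0) (b := s)
        (fun r hr => ((hud r hr.1).continuousAt).continuousWithinAt)
        (fun r hr => (hud r hr.1).hasDerivWithinAt)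
        s ⟨hs, le_rfl⟩
      simpa [hx0, hz, ha, hb] using this
    -- solve for x · 0
    have hx0eq : ∀ s, 0 ≤ s → x s 0 = a + z * s := by
      intro s hs
      have := eq_of_has_deriv_right_eq (f := fun r => x r 0) (g := fun r => a + z * r)
        (f' := fun _ => z) (a := 0) (b := s)
        (fun r hr => by
          have hd := hx0d r hr.1
          rw [huc r hr.1] at hd
          exact hd.hasDerivWithinAt)
        (fun r hr => by
          have : HasDerivAt (fun r : ℝ => a + z * r) (z * 1) r :=
            ((hasDerivAt_id r).const_mul z).const_add a
          simpa using this.hasDerivWithinAt)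
        (fun r hr => ((hx0d r hr.1).continuousAt).continuousWithinAt)
        (by fun_prop)
        (by simp [hx0, ha])
        s ⟨hs, le_rfl⟩
      exact this
    -- solve for x · 1
    have hx1eq : ∀ s, 0 ≤ s → x s 1 = b - 2 * z * a * s - z ^ 2 * s ^ 2 := by
      intro s hs
      have := eq_of_has_deriv_right_eq (f := fun r => x r 1)
        (g := fun r => b - 2 * z * a * r - z ^ 2 * r ^ 2)
        (f' := fun r => -2 * (a + z * r) * z) (a := 0) (b := s)
        (fun r hr => by
          have hd := hx1d r hr.1
          rw [huc r hr.1, hx0eq r hr.1] at hd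
          exact hd.hasDerivWithinAt)
        (fun r hr => by
          have d1 : HasDerivAt (fun r : ℝ => b - 2 * z * a * r) (-(2 * z * a * 1)) r :=
            ((hasDerivAt_id r).const_mul (2 * z * a)).const_sub b
          have d2 : HasDerivAt (fun r : ℝ => z ^ 2 * r ^ 2) (z ^ 2 * (2 * r ^ (2 - 1))) r :=
            (hasDerivAt_pow 2 r).const_mul (z ^ 2)
          have := d1.sub d2
          have heq : -(2 * z * a * 1) - z ^ 2 * (2 * r ^ (2 - 1)) = -2 * (a + z * r) * z := by
            norm_num; ring
          rw [heq] at this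
          exact this.hasDerivWithinAt)
        (fun r hr => ((hx1d r hr.1).continuousAt).continuousWithinAt)
        (by fun_prop)
        (by simp [hx0, hb])
        s ⟨hs, le_rfl⟩
      exact this
    -- now compute the matrix exponential side
    have hexp : NormedSpace.exp (t • Amat) = 1 + t • Amat + (2:ℝ)⁻¹ • (t • Amat) ^ 2 :=
      exp_of_cube_zero _ (by rw [smul_pow, Amat_cube, smul_zero])
    have hv : Fin.append x₀
        (![x₀ 0 * (x₀ 1 + x₀ 0 ^ 2), (x₀ 1 + x₀ 0 ^ 2) ^ 2, x₀ 1 + x₀ 0 ^ 2] : Fin 3 → ℝ)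
        = ![a, b, a * z, z ^ 2, z] := by
      funext j
      fin_cases j <;> rfl
    rw [hexp, hv]
    have e1 : Amat.mulVec ![a, b, a * z, z ^ 2, z] = ![z, -2 * (a * z), z ^ 2, 0, 0] := by
      rw [Amat_mulVec]; norm_num; exact ⟨rfl, rfl, rfl⟩
    have e2 : Amat.mulVec ![z, -2 * (a * z), z ^ 2, 0, 0] = ![0, -2 * z ^ 2, 0, 0, 0] := by
      rw [Amat_mulVec]; norm_num; exact ⟨rfl, rfl, rfl⟩
    have key : (1 + t • Amat + (2:ℝ)⁻¹ • (t • Amat) ^ 2).mulVec ![a, b, a * z, z ^ 2, z]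
        = ![a, b, a * z, z ^ 2, z] + t • ![z, -2 * (a * z), z ^ 2, 0, 0]
          + ((2:ℝ)⁻¹ * (t * t)) • ![0, -2 * z ^ 2, 0, 0, 0] := by
      simp only [pow_two (t • Amat), Matrix.add_mulVec, Matrix.one_mulVec,
        Matrix.smul_mulVec, ← Matrix.mulVec_mulVec, Matrix.mulVec_smul,
        e1, e2, smul_smul]
    rw [key]
    fin_cases i
    · show (_ : Fin 5 → ℝ) 0 = x t 0
      rw [hx0eq t ht]
      simp
      ring
    · show (_ : Fin 5 → ℝ) 1 = x t 1
      rw [hx1eq t ht]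
      simp
      ring
  · -- not WDG
    intro hW
    obtain ⟨r, hr⟩ := hW 1 le_rfl (fun _ => 0) rfl (by
      intro ℓ _
      intro heq
      have := congrFun heq (fun _ => 1)
      rw [hpd] at this
      norm_num at this)
    have h1' := hr (fun _ => 0)
    have h2' := hr (fun _ => 1)
    rw [Finset.prod_range_one, hpd] at h1' h2'
    norm_num at h1' h2'
    rw [← h1'] at h2'
    norm_num at h2'
end
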